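/- arXiv:1403.2281 — 4 statements merged into one kernel-verified Lean document; each statement's English description precedes it below -/
import Mathlib

section
/- For any entire function F : ℂ → ℂ that is analytic on the strip -1 ≤ Im(x) ≤ 0 and such that F(a·x·(x+i))/cosh(π x) is integrable over the real line (with sufficient decay as Re(x) → ±∞), one has ∫_{-∞}^{∞} F(a·x·(x+i))/cosh(π x) dx = F(a/4). -/
open Complex Real MeasureTheory intervalIntegral Filter Topology Set Asymptotics
open scoped Interval

lemma sech_hasDeriv (x : ℝ) :
    HasDerivAt (fun t : ℝ => (1 / Real.pi) * Real.arctan (Real.sinh (Real.pi * t)))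
      ((Real.cosh (Real.pi * x))⁻¹) x := by
  have h1 : HasDerivAt (fun t : ℝ => Real.pi * t) Real.pi x := by
    simpa using (hasDerivAt_id x).const_mul Real.pi
  have h2 : HasDerivAt (fun t : ℝ => Real.sinh (Real.pi * t)) (Real.cosh (Real.pi * x) * Real.pi) x :=
    (Real.hasDerivAt_sinh (Real.pi * x)).comp x h1
  have h3 := (Real.hasDerivAt_arctan (Real.sinh (Real.pi * x))).comp x h2
  have h4 := h3.const_mul (1 / Real.pi)
  refine HasDerivAt.congr_deriv h4 ?_
  rw [← Real.cosh_sq']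
  have hc := Real.cosh_pos (x := Real.pi * x)
  have hπ := Real.pi_ne_zero
  field_simp

lemma sech_integrable_R : Integrable (fun x : ℝ => (Real.cosh (Real.pi * x))⁻¹) := by
  have hcont : Continuous (fun x : ℝ => (Real.cosh (Real.pi * x))⁻¹) :=
    (Real.continuous_cosh.comp (continuous_const.mul continuous_id)).inv₀
      (fun x => (Real.cosh_pos (x := Real.pi * x)).ne')
  apply MeasureTheory.integrable_of_intervalIntegral_norm_bounded (l := atTop)
    (a := fun R : ℝ => -R) (b := fun R : ℝ => R) 1
    (fun R => hcont.integrableOn_Ioc) tendsto_neg_atTop_atBot tendsto_id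
  filter_upwards with R
  have heq : (∫ x in (-R)..R, ‖(Real.cosh (Real.pi * x))⁻¹‖)
      = ∫ x in (-R)..R, (Real.cosh (Real.pi * x))⁻¹ := by
    congr 1; funext x
    rw [Real.norm_eq_abs, abs_of_pos (inv_pos.2 (Real.cosh_pos (x := Real.pi * x)))]
  rw [heq, intervalIntegral.integral_eq_sub_of_hasDerivAt (fun t _ => sech_hasDeriv t)
    (hcont.intervalIntegrable _ _)]
  have b1 := Real.arctan_lt_pi_div_two (Real.sinh (Real.pi * R))
  have b2 := Real.neg_pi_div_two_lt_arctan (Real.sinh (Real.pi * (-R)))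
  have hπ := Real.pi_pos
  rw [div_mul_eq_mul_div, div_mul_eq_mul_div, one_mul, one_mul, div_sub_div_same, div_le_one hπ]
  linarith

lemma sinh_tendsto_atTop : Tendsto Real.sinh atTop atTop := by
  apply tendsto_atTop_mono' atTop ?_ tendsto_id
  filter_upwards [eventually_gt_atTop 0] with x hx
  exact Real.self_le_sinh_iff.2 hx.le

lemma sech_integral_R : ∫ x : ℝ, (Real.cosh (Real.pi * x))⁻¹ = 1 := by
  have hπ := Real.pi_pos
  have hmul : Tendsto (fun x : ℝ => Real.pi * x) atTop atTop :=
    Tendsto.const_mul_atTop hπ tendsto_id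
  have hmulb : Tendsto (fun x : ℝ => Real.pi * x) atBot atBot :=
    Tendsto.const_mul_atBot hπ tendsto_id
  have hsb : Tendsto Real.sinh atBot atBot := by
    have h1 := tendsto_neg_atTop_atBot.comp (sinh_tendsto_atTop.comp tendsto_neg_atBot_atTop)
    have : (fun x : ℝ => -Real.sinh (-x)) = Real.sinh := by
      funext x; rw [Real.sinh_neg, neg_neg]
    rwa [show (Neg.neg ∘ Real.sinh ∘ Neg.neg) = Real.sinh from this] at h1
  have htop : Tendsto (fun x : ℝ => (1 / Real.pi) * Real.arctan (Real.sinh (Real.pi * x)))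
      atTop (𝓝 ((1 / Real.pi) * (Real.pi / 2))) :=
    ((Real.tendsto_arctan_atTop.mono_right nhdsWithin_le_nhds).comp
      (sinh_tendsto_atTop.comp hmul)).const_mul _
  have hbot : Tendsto (fun x : ℝ => (1 / Real.pi) * Real.arctan (Real.sinh (Real.pi * x)))
      atBot (𝓝 ((1 / Real.pi) * (-(Real.pi / 2)))) :=
    ((Real.tendsto_arctan_atBot.mono_right nhdsWithin_le_nhds).comp
      (hsb.comp hmulb)).const_mul _
  rw [MeasureTheory.integral_of_hasDerivAt_of_tendsto sech_hasDeriv sech_integrable_R hbot htop]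
  field_simp
  norm_num

lemma sech_C_eq (x : ℝ) : (Complex.cosh ((Real.pi : ℂ) * (x : ℂ)))⁻¹
    = (((Real.cosh (Real.pi * x))⁻¹ : ℝ) : ℂ) := by
  rw [← Complex.ofReal_mul, ← Complex.ofReal_cosh, ← Complex.ofReal_inv]

lemma sech_integrable_C : Integrable (fun x : ℝ => (Complex.cosh ((Real.pi : ℂ) * (x : ℂ)))⁻¹) := by
  simp only [sech_C_eq]
  exact sech_integrable_R.ofReal

lemma sech_integral_C : ∫ x : ℝ, (Complex.cosh ((Real.pi : ℂ) * (x : ℂ)))⁻¹ = 1 := by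
  simp only [sech_C_eq]
  have h := ContinuousLinearMap.integral_comp_comm Complex.ofRealCLM sech_integrable_R
  simp only [Complex.ofRealCLM_apply] at h
  rw [h, sech_integral_R, Complex.ofReal_one]

lemma norm_cosh_lower (w : ℂ) : Real.sinh |w.re| ≤ ‖Complex.cosh w‖ := by
  have h1 : ‖Complex.exp w‖ = Real.exp w.re := Complex.norm_exp w
  have h2 : ‖Complex.exp (-w)‖ = Real.exp (-w.re) := by
    rw [Complex.norm_exp, Complex.neg_re]
  have hcosh : ‖Complex.cosh w‖ = ‖Complex.exp w + Complex.exp (-w)‖ / 2 := by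
    rw [Complex.cosh]
    rw [norm_div]
    norm_num
  rw [hcosh, Real.sinh_eq]
  have key : Real.exp |w.re| - Real.exp (-|w.re|) ≤ ‖Complex.exp w + Complex.exp (-w)‖ := by
    rcases le_total 0 w.re with h | h
    · rw [_root_.abs_of_nonneg h]
      have := norm_add_le (Complex.exp w + Complex.exp (-w)) (-Complex.exp (-w))
      simp only [add_neg_cancel_right, norm_neg] at this
      rw [h1, h2] at this
      linarith [this]
    · rw [_root_.abs_of_nonpos h]
      have := norm_add_le (Complex.exp w + Complex.exp (-w)) (-Complex.exp w)
      have heq : Complex.exp w + Complex.exp (-w) + -Complex.exp w = Complex.exp (-w) := by ring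
      rw [heq, norm_neg, h1, h2] at this
      rw [neg_neg]
      linarith [this]
  linarith [key]

noncomputable def ccc : ℂ := -(Complex.I / 2)

lemma ccc_im : ccc.im = -(1/2) := by simp [ccc]

lemma ccc_re : ccc.re = 0 := by simp [ccc]

lemma cosh_pi_ccc : Complex.cosh ((Real.pi : ℂ) * ccc) = 0 := by
  have h : (Real.pi : ℂ) * ccc = ((-(Real.pi/2) : ℝ) : ℂ) * Complex.I := by
    simp [ccc]; push_cast; ring
  rw [h, Complex.cosh_mul_I, ← Complex.ofReal_cos, Real.cos_neg, Real.cos_pi_div_two,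
    Complex.ofReal_zero]

lemma sinh_pi_ccc : Complex.sinh ((Real.pi : ℂ) * ccc) = -Complex.I := by
  have h : (Real.pi : ℂ) * ccc = ((-(Real.pi/2) : ℝ) : ℂ) * Complex.I := by
    simp [ccc]; push_cast; ring
  rw [h, Complex.sinh_mul_I, ← Complex.ofReal_sin, Real.sin_neg, Real.sin_pi_div_two]
  simp

lemma cosh_pi_ne_zero_on_strip (z : ℂ) (h1 : -1 ≤ z.im) (h2 : z.im ≤ 0) (hz : z ≠ ccc) :
    Complex.cosh ((Real.pi : ℂ) * z) ≠ 0 := by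
  intro h0
  have hcos : Complex.cos ((Real.pi : ℂ) * z * Complex.I) = 0 := by
    rw [Complex.cos_mul_I]; exact h0
  rw [Complex.cos_eq_zero_iff] at hcos
  obtain ⟨k, hk⟩ := hcos
  have hπ : ((Real.pi : ℝ) : ℂ) ≠ 0 := Complex.ofReal_ne_zero.2 Real.pi_ne_zero
  have hz'' : (Real.pi : ℂ) * z = (Real.pi : ℂ) * (-((2 * (k : ℂ) + 1) / 2) * Complex.I) := by
    linear_combination (-Complex.I) * hk + ((Real.pi : ℂ) * z) * Complex.I_sq
  have hz' : z = -((2 * (k : ℂ) + 1) / 2) * Complex.I := mul_left_cancel₀ hπ hz''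
  have him : z.im = -((2 * (k : ℝ) + 1) / 2) := by
    have : z = ((-((2 * (k : ℝ) + 1) / 2) : ℝ) : ℂ) * Complex.I := by
      rw [hz']; push_cast; ring
    rw [this]
    simp
  have hk1 : (0 : ℝ) ≤ 2 * (k : ℝ) + 1 := by
    have := h2; rw [him] at this; linarith
  have hk2 : 2 * (k : ℝ) + 1 ≤ 2 := by
    have := h1; rw [him] at this; linarith
  have hk0 : k = 0 := by
    have l1 : (0 : ℤ) ≤ 2 * k + 1 := by exact_mod_cast hk1
    have l2 : 2 * k + 1 ≤ 2 := by exact_mod_cast hk2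
    omega
  apply hz
  rw [hz', hk0, ccc]
  push_cast
  ring

lemma cosh_shift (x : ℝ) :
    Complex.cosh ((Real.pi : ℂ) * ((x : ℂ) + ((-1 : ℝ) : ℂ) * Complex.I))
      = -Complex.cosh ((Real.pi : ℂ) * ((-x : ℝ) : ℂ)) := by
  have h : (Real.pi : ℂ) * ((x : ℂ) + ((-1 : ℝ) : ℂ) * Complex.I)
      = (Real.pi : ℂ) * (x : ℂ) - (Real.pi : ℂ) * Complex.I := by push_cast; ring
  rw [h, Complex.cosh_sub]
  have h1 : Complex.cosh ((Real.pi : ℂ) * Complex.I) = -1 := by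
    rw [Complex.cosh_mul_I, ← Complex.ofReal_cos, Real.cos_pi]; norm_num
  have h2 : Complex.sinh ((Real.pi : ℂ) * Complex.I) = 0 := by
    rw [Complex.sinh_mul_I, ← Complex.ofReal_sin, Real.sin_pi]; norm_num
  rw [h1, h2]
  push_cast
  rw [show (Real.pi : ℂ) * -(x : ℂ) = -((Real.pi : ℂ) * (x : ℂ)) by ring, Complex.cosh_neg]
  ring

theorem master_theorem_cosh (F : ℂ → ℂ) (a : ℝ)
    (hF : Differentiable ℂ F)
    (hstrip : DifferentiableOn ℂ (fun z : ℂ => F (a * z * (z + Complex.I)))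
      {z : ℂ | -1 ≤ z.im ∧ z.im ≤ 0})
    (hint : Integrable (fun x : ℝ =>
      F (a * x * (x + Complex.I)) / Complex.cosh (Real.pi * x)))
    (hdecay : ∀ ε > 0, ∃ M : ℝ, ∀ z : ℂ, -1 ≤ z.im → z.im ≤ 0 → M ≤ |z.re| →
      ‖F (a * z * (z + Complex.I))‖ * Real.exp (-Real.pi * |z.re|) * |z.re| ≤ ε) :
    ∫ x : ℝ, F (a * x * (x + Complex.I)) / Complex.cosh (Real.pi * x) = F (a / 4) := by
  set S : Set ℂ := {z : ℂ | -1 ≤ z.im ∧ z.im ≤ 0} with hS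
  set g : ℂ → ℂ := fun z => F (↑a * z * (z + Complex.I)) with hgdef
  set F4 : ℂ := F ((a : ℂ) / 4) with hF4def
  set ψ : ℂ → ℂ := fun z => (g z - F4) / Complex.cosh ((Real.pi : ℂ) * z) with hψdef
  -- value at the pole
  have hgc : g ccc = F4 := by
    have : (a : ℂ) * ccc * (ccc + Complex.I) = (a : ℂ) / 4 := by
      rw [ccc]
      linear_combination (-(a : ℂ) / 4) * Complex.I_sq
    rw [hgdef]
    simp only []
    rw [this]
  -- differentiability of ψ away from the pole
  have hgd : DifferentiableOn ℂ g S := hstrip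
  have hden : Differentiable ℂ (fun z : ℂ => Complex.cosh ((Real.pi : ℂ) * z)) :=
    Complex.differentiable_cosh.comp ((differentiable_id.const_mul _))
  have hψd : DifferentiableOn ℂ ψ (S \ {ccc}) := by
    apply DifferentiableOn.div ((hgd.sub_const F4).mono diff_subset) (hden.differentiableOn)
    intro z hz
    exact cosh_pi_ne_zero_on_strip z hz.1.1 hz.1.2 (by simpa using hz.2)
  -- ball around the pole inside the strip
  have hball : Metric.ball ccc (4⁻¹ : ℝ) ⊆ S := by
    intro z hz
    rw [Metric.mem_ball, Complex.dist_eq] at hz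
    have him := Complex.abs_im_le_norm (z - ccc)
    rw [Complex.sub_im, ccc_im] at him
    have habs := abs_lt.1 (lt_of_le_of_lt him hz)
    show -1 ≤ z.im ∧ z.im ≤ 0
    constructor <;> linarith
  -- ψ tends to a limit at ccc
  have hgc_diff : DifferentiableAt ℂ g ccc :=
    (hgd.mono hball).differentiableAt (Metric.ball_mem_nhds ccc (by norm_num))
  have htend1 : Tendsto (fun z => (g z - g ccc) / (z - ccc)) (𝓝[≠] ccc) (𝓝 (deriv g ccc)) := by
    have h := hasDerivAt_iff_tendsto_slope.1 hgc_diff.hasDerivAt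
    apply h.congr
    intro z
    rw [slope_def_field]
  have hcoshd : HasDerivAt (fun z : ℂ => Complex.cosh ((Real.pi : ℂ) * z))
      (Complex.sinh ((Real.pi : ℂ) * ccc) * (Real.pi : ℂ)) ccc := by
    have h1 : HasDerivAt (fun z : ℂ => (Real.pi : ℂ) * z) (Real.pi : ℂ) ccc := by
      simpa using (hasDerivAt_id ccc).const_mul (Real.pi : ℂ)
    exact (Complex.hasDerivAt_cosh _).comp ccc h1
  have hDne : Complex.sinh ((Real.pi : ℂ) * ccc) * (Real.pi : ℂ) ≠ 0 := by
    rw [sinh_pi_ccc]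
    exact mul_ne_zero (neg_ne_zero.2 Complex.I_ne_zero) (Complex.ofReal_ne_zero.2 Real.pi_ne_zero)
  have htend2 : Tendsto (fun z => (z - ccc) / Complex.cosh ((Real.pi : ℂ) * z)) (𝓝[≠] ccc)
      (𝓝 ((Complex.sinh ((Real.pi : ℂ) * ccc) * (Real.pi : ℂ))⁻¹)) := by
    have hslope := hasDerivAt_iff_tendsto_slope.1 hcoshd
    have h1 : Tendsto (fun z => Complex.cosh ((Real.pi : ℂ) * z) / (z - ccc)) (𝓝[≠] ccc)
        (𝓝 (Complex.sinh ((Real.pi : ℂ) * ccc) * (Real.pi : ℂ))) := by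
      apply hslope.congr
      intro z
      rw [slope_def_field, cosh_pi_ccc, sub_zero]
    apply (h1.inv₀ hDne).congr
    intro z
    rw [inv_div]
  have htendψ : Tendsto ψ (𝓝[≠] ccc)
      (𝓝 (deriv g ccc * (Complex.sinh ((Real.pi : ℂ) * ccc) * (Real.pi : ℂ))⁻¹)) := by
    apply (htend1.mul htend2).congr'
    filter_upwards [self_mem_nhdsWithin] with z hz
    have hzc : (z : ℂ) - ccc ≠ 0 := sub_ne_zero.2 hz
    show (g z - g ccc) / (z - ccc) * ((z - ccc) / Complex.cosh ((Real.pi : ℂ) * z)) = ψ z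
    rw [hgc, div_mul_div_comm, mul_comm (z - ccc) (Complex.cosh ((Real.pi : ℂ) * z)),
      mul_div_mul_right _ _ hzc]
  have ho : (fun z => ψ z - ψ ccc) =o[𝓝[≠] ccc] fun z => (z - ccc)⁻¹ :=
    Filter.IsBoundedUnder.isLittleO_sub_self_inv
      ((htendψ.sub_const (ψ ccc)).norm.isBoundedUnder_le)
  set Ψ : ℂ → ℂ := Function.update ψ ccc (limUnder (𝓝[≠] ccc) ψ) with hΨdef
  have hΨball : DifferentiableOn ℂ Ψ (Metric.ball ccc 4⁻¹) :=
    Complex.differentiableOn_update_limUnder_of_isLittleO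
      (Metric.ball_mem_nhds ccc (by norm_num))
      (hψd.mono (fun z hz => ⟨hball hz.1, hz.2⟩)) ho
  have hΨS : DifferentiableOn ℂ Ψ S := by
    intro z hz
    by_cases hzc : z = ccc
    · subst hzc
      exact (hΨball.differentiableAt
        (Metric.ball_mem_nhds _ (by norm_num))).differentiableWithinAt
    · have h1 : DifferentiableWithinAt ℂ ψ (S \ {ccc}) z := hψd z ⟨hz, hzc⟩
      have h2 : DifferentiableWithinAt ℂ ψ S z := by
        rw [diff_eq] at h1
        exact (differentiableWithinAt_inter
          (isOpen_compl_singleton.mem_nhds (by simpa using hzc))).1 h1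
      apply h2.congr_of_eventuallyEq
      · apply Filter.eventually_of_mem
          (mem_nhdsWithin_of_mem_nhds (isOpen_compl_singleton.mem_nhds (by simpa using hzc)))
        intro w hw
        exact Function.update_of_ne (by simpa using hw) _ _
      · exact Function.update_of_ne hzc _ _
  -- boundary values avoid the pole
  have hupdate : ∀ w : ℂ, w ≠ ccc → Ψ w = ψ w := fun w hw => Function.update_of_ne hw _ _
  have hne_im : ∀ x t : ℝ, t ≠ -(1/2) → ((x : ℂ) + (t : ℂ) * Complex.I) ≠ ccc := by
    intro x t ht h
    apply ht
    have h2 := congrArg Complex.im h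
    simpa [ccc_im] using h2
  have hne_re : ∀ x y : ℝ, x ≠ 0 → ((x : ℂ) + (y : ℂ) * Complex.I) ≠ ccc := by
    intro x y hx h
    apply hx
    have h2 := congrArg Complex.re h
    simpa [ccc_re] using h2
  set A : ℝ → ℂ := fun R => ∫ x in (-R)..R, ψ ((x : ℝ) : ℂ) with hAdef
  set Sr : ℝ → ℂ := fun R =>
    ∫ y in (-1 : ℝ)..(0 : ℝ), ψ ((R : ℂ) + (y : ℂ) * Complex.I) with hSrdef
  set Sl : ℝ → ℂ := fun R =>
    ∫ y in (-1 : ℝ)..(0 : ℝ), ψ (((-R : ℝ) : ℂ) + (y : ℂ) * Complex.I) with hSldef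
  have hrect : ∀ R : ℝ, 0 < R → A R = (Complex.I * Sr R - Complex.I * Sl R) / 2 := by
    intro R hR
    have hsub : [[(-(R:ℂ) - Complex.I).re, ((R:ℂ)).re]] ×ℂ
        [[(-(R:ℂ) - Complex.I).im, ((R:ℂ)).im]] ⊆ S := by
      intro w hw
      rw [Complex.mem_reProdIm] at hw
      have h2 := hw.2
      simp only [Complex.sub_im, Complex.neg_im, Complex.ofReal_im, Complex.I_im, neg_zero,
        zero_sub] at h2
      rw [Set.uIcc_of_le (by norm_num : (-1:ℝ) ≤ 0)] at h2
      exact ⟨h2.1, h2.2⟩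
    have h0 := Complex.integral_boundary_rect_eq_zero_of_differentiableOn Ψ
      (-(R:ℂ) - Complex.I) ((R:ℂ)) (hΨS.mono hsub)
    simp only [Complex.sub_re, Complex.neg_re, Complex.ofReal_re, Complex.I_re, sub_zero,
      neg_zero, Complex.sub_im, Complex.neg_im, Complex.ofReal_im, Complex.I_im, zero_sub] at h0
    have hbot : (∫ x in (-R)..R, Ψ ((x:ℂ) + ((-1:ℝ):ℂ) * Complex.I)) = -(A R) := by
      have hpt : ∀ x : ℝ, Ψ ((x:ℂ) + ((-1:ℝ):ℂ) * Complex.I)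
          = -ψ (((-x : ℝ) : ℂ)) := by
        intro x
        rw [hupdate _ (hne_im x (-1) (by norm_num))]
        show (g ((x:ℂ) + ((-1:ℝ):ℂ) * Complex.I) - F4) /
            Complex.cosh ((Real.pi:ℂ) * ((x:ℂ) + ((-1:ℝ):ℂ) * Complex.I))
          = -((g (((-x : ℝ):ℂ)) - F4) / Complex.cosh ((Real.pi:ℂ) * ((-x : ℝ):ℂ)))
        have hgeq : g ((x:ℂ) + ((-1:ℝ):ℂ) * Complex.I) = g (((-x : ℝ):ℂ)) := by
          show F ((a:ℂ) * ((x:ℂ) + ((-1:ℝ):ℂ) * Complex.I) * (((x:ℂ) + ((-1:ℝ):ℂ) * Complex.I) + Complex.I))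
            = F ((a:ℂ) * (((-x : ℝ):ℂ)) * ((((-x : ℝ):ℂ)) + Complex.I))
          exact congrArg F (by push_cast; ring)
        rw [hgeq, cosh_shift x, div_neg]
      have hcomp : (∫ x in (-R)..R, ψ (((-x : ℝ) : ℂ))) = ∫ x in (-R)..R, ψ ((x : ℝ) : ℂ) := by
        have h := intervalIntegral.integral_comp_neg (a := -R) (b := R)
          (fun t : ℝ => ψ ((t : ℝ) : ℂ))
        simpa using h
      rw [intervalIntegral.integral_congr (fun x _ => hpt x)]
      simp only [intervalIntegral.integral_neg]
      rw [hcomp]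
    have htopc : (∫ x in (-R)..R, Ψ ((x:ℂ) + ((0:ℝ):ℂ) * Complex.I)) = A R := by
      apply intervalIntegral.integral_congr
      intro x _
      show Ψ ((x:ℂ) + ((0:ℝ):ℂ) * Complex.I) = ψ ((x : ℝ) : ℂ)
      rw [hupdate _ (hne_im x 0 (by norm_num))]
      congr 1
      push_cast
      ring
    have hsr : (∫ y in (-1:ℝ)..(0:ℝ), Ψ ((R:ℂ) + (y:ℂ) * Complex.I)) = Sr R :=
      intervalIntegral.integral_congr fun y _ => hupdate _ (hne_re R y hR.ne')
    have hsl : (∫ y in (-1:ℝ)..(0:ℝ), Ψ (((-R : ℝ):ℂ) + (y:ℂ) * Complex.I)) = Sl R :=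
      intervalIntegral.integral_congr fun y _ => hupdate _ (hne_re (-R) y (neg_ne_zero.2 hR.ne'))
    rw [hbot, htopc, hsr, hsl, smul_eq_mul, smul_eq_mul] at h0
    linear_combination (-1/2 : ℂ) * h0
  -- integrability of ψ on the real line
  have hψcoe : (fun x : ℝ => ψ ((x : ℝ) : ℂ))
      = fun x : ℝ => F ((a:ℂ) * (x:ℂ) * ((x:ℂ) + Complex.I)) / Complex.cosh ((Real.pi:ℂ) * (x:ℂ))
        - F4 * (Complex.cosh ((Real.pi:ℂ) * (x:ℂ)))⁻¹ := by
    funext x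
    show (g ((x:ℂ)) - F4) / Complex.cosh ((Real.pi:ℂ) * (x:ℂ)) = _
    rw [sub_div, div_eq_mul_inv F4]
  have hψint : Integrable (fun x : ℝ => ψ ((x : ℝ) : ℂ)) := by
    rw [hψcoe]
    exact hint.sub (sech_integrable_C.const_mul F4)
  have hAtend : Tendsto A atTop (𝓝 (∫ x : ℝ, ψ ((x : ℝ) : ℂ))) :=
    intervalIntegral_tendsto_integral hψint tendsto_neg_atTop_atBot tendsto_id
  -- uniform smallness of ψ on vertical segments far out
  have hcore : ∀ ε > 0, ∃ M : ℝ, 1 ≤ M ∧ ∀ x y : ℝ, M ≤ |x| → -1 ≤ y → y ≤ 0 →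
      ‖ψ ((x:ℂ) + (y:ℂ) * Complex.I)‖ ≤ ε := by
    intro ε hε
    obtain ⟨M₀, hM₀⟩ := hdecay (ε/6) (by positivity)
    have hFlim : Tendsto (fun R : ℝ => 4 * ‖F4‖ * Real.exp (-(Real.pi * R))) atTop (𝓝 0) := by
      have h1 : Tendsto (fun R : ℝ => -(Real.pi * R)) atTop atBot :=
        tendsto_neg_atTop_atBot.comp (Tendsto.const_mul_atTop Real.pi_pos tendsto_id)
      have h2 := Real.tendsto_exp_atBot.comp h1
      have h3 := h2.const_mul (4 * ‖F4‖)
      simpa [mul_zero, Function.comp_def] using h3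
    have hev := hFlim.eventually_lt_const (by positivity : (0:ℝ) < ε/3)
    obtain ⟨K, hK⟩ := eventually_atTop.1 hev
    refine ⟨max (max M₀ 1) K, le_trans (le_max_right M₀ 1) (le_max_left _ K), ?_⟩
    intro x y hx h1y h2y
    have hRM0 : M₀ ≤ |x| := le_trans (le_trans (le_max_left M₀ 1) (le_max_left _ K)) hx
    have hR1 : 1 ≤ |x| := le_trans (le_trans (le_max_right M₀ 1) (le_max_left _ K)) hx
    have hRK : K ≤ |x| := le_trans (le_max_right _ K) hx
    set z : ℂ := (x:ℂ) + (y:ℂ) * Complex.I with hzdef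
    have hzre : z.re = x := by simp [hzdef]
    have hzim : z.im = y := by simp [hzdef]
    have hgz : ‖g z‖ * Real.exp (-Real.pi * |x|) * |x| ≤ ε/6 := by
      have := hM₀ z (by rw [hzim]; exact h1y) (by rw [hzim]; exact h2y) (by rw [hzre]; exact hRM0)
      rwa [hzre] at this
    have hclow : Real.sinh (Real.pi * |x|) ≤ ‖Complex.cosh ((Real.pi:ℂ) * z)‖ := by
      have h := norm_cosh_lower ((Real.pi : ℂ) * z)
      have hre : ((Real.pi : ℂ) * z).re = Real.pi * x := by
        simp [Complex.mul_re, hzre, hzim]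
      rw [hre, abs_mul, abs_of_pos Real.pi_pos] at h
      exact h
    have hf4 : 4 * ‖F4‖ * Real.exp (-(Real.pi * |x|)) ≤ ε/3 := (hK |x| hRK).le
    -- numeric bookkeeping
    set E : ℝ := Real.exp (Real.pi * |x|) with hEdef
    have hEpos : 0 < E := Real.exp_pos _
    have hEinv : Real.exp (-(Real.pi * |x|)) = E⁻¹ := by rw [Real.exp_neg]
    have hE2 : 2 ≤ E := by
      have := Real.add_one_le_exp (Real.pi * |x|)
      have hπ3 : (3:ℝ) < Real.pi := Real.pi_gt_three
      nlinarith [mul_le_mul_of_nonneg_left hR1 Real.pi_pos.le]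
    have hsinh : Real.sinh (Real.pi * |x|) = (E - E⁻¹) / 2 := by
      rw [Real.sinh_eq, hEdef, Real.exp_neg]
    have hC : E / 4 ≤ ‖Complex.cosh ((Real.pi:ℂ) * z)‖ := by
      have h21 : E⁻¹ ≤ 2⁻¹ := by
        apply inv_anti₀ (by norm_num) hE2
      rw [hsinh] at hclow
      have : (2:ℝ)⁻¹ ≤ E / 2 := by linarith
      linarith
    have hCpos : 0 < ‖Complex.cosh ((Real.pi:ℂ) * z)‖ := lt_of_lt_of_le (by linarith) hC
    have hn : ‖g z‖ ≤ ε / 6 * E := by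
      have hinv' : ‖g z‖ * E⁻¹ ≤ ε / 6 := by
        have h1 : ‖g z‖ * E⁻¹ * 1 ≤ ‖g z‖ * E⁻¹ * |x| := by
          apply mul_le_mul_of_nonneg_left hR1
          positivity
        rw [mul_one] at h1
        rw [neg_mul, hEinv] at hgz
        exact le_trans h1 hgz
      calc ‖g z‖ = ‖g z‖ * E⁻¹ * E := by
            rw [mul_assoc, inv_mul_cancel₀ hEpos.ne', mul_one]
      _ ≤ ε / 6 * E := mul_le_mul_of_nonneg_right hinv' hEpos.le
    have hf4' : ‖F4‖ ≤ ε / 12 * E := by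
      rw [hEinv] at hf4
      calc ‖F4‖ = 4 * ‖F4‖ * E⁻¹ * E / 4 := by
            rw [mul_assoc, inv_mul_cancel₀ hEpos.ne', mul_one]
            ring
      _ ≤ ε / 3 * E / 4 := by
          have hh := mul_le_mul_of_nonneg_right hf4 hEpos.le
          linarith
      _ = ε / 12 * E := by ring
    show ‖(g z - F4) / Complex.cosh ((Real.pi:ℂ) * z)‖ ≤ ε
    rw [norm_div, div_le_iff₀ hCpos]
    have hsub := norm_sub_le (g z) F4
    nlinarith [hC, hEpos, hε, mul_le_mul_of_nonneg_left hC hε.le]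
  -- the side integrals vanish in the limit
  have hside : ∀ (σ : ℝ → ℝ), (∀ R : ℝ, 1 ≤ R → |σ R| = R) →
      Tendsto (fun R : ℝ => ∫ y in (-1:ℝ)..(0:ℝ),
        ψ ((σ R : ℂ) + (y:ℂ) * Complex.I)) atTop (𝓝 0) := by
    intro σ hσ
    rw [NormedAddCommGroup.tendsto_nhds_zero]
    intro ε hε
    obtain ⟨M, hM1, hM⟩ := hcore (ε/2) (by positivity)
    filter_upwards [eventually_ge_atTop M] with R hR
    have hR1 : (1:ℝ) ≤ R := le_trans hM1 hR
    have habs : |σ R| = R := hσ R hR1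
    have hnorm : ‖∫ y in (-1:ℝ)..(0:ℝ), ψ ((σ R : ℂ) + (y:ℂ) * Complex.I)‖
        ≤ (ε/2) * |(0:ℝ) - (-1)| := by
      apply intervalIntegral.norm_integral_le_of_norm_le_const
      intro y hy
      rw [Set.uIoc_of_le (by norm_num : (-1:ℝ) ≤ 0)] at hy
      exact hM (σ R) y (by rw [habs]; exact hR) hy.1.le hy.2
    have : (ε/2) * |(0:ℝ) - (-1)| = ε/2 := by norm_num
    rw [this] at hnorm
    exact lt_of_le_of_lt hnorm (by linarith)
  have hSr0 : Tendsto Sr atTop (𝓝 0) := by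
    have h := hside (fun R => R) (fun R hR => abs_of_pos (by linarith))
    exact h
  have hSl0 : Tendsto Sl atTop (𝓝 0) := by
    have h := hside (fun R => -R) (fun R hR => by rw [abs_neg]; exact abs_of_pos (by linarith))
    exact h
  -- conclude
  have hA0 : Tendsto A atTop (𝓝 0) := by
    have h1 : Tendsto (fun R => (Complex.I * Sr R - Complex.I * Sl R) / 2) atTop
        (𝓝 ((Complex.I * 0 - Complex.I * 0) / 2)) :=
      ((hSr0.const_mul _).sub (hSl0.const_mul _)).div_const _
    simp only [mul_zero, sub_zero, zero_div] at h1
    apply h1.congr'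
    filter_upwards [eventually_gt_atTop 0] with R hR
    exact (hrect R hR).symm
  have hintzero : ∫ x : ℝ, ψ ((x : ℝ) : ℂ) = 0 := tendsto_nhds_unique hAtend hA0
  rw [hψcoe, MeasureTheory.integral_sub hint (sech_integrable_C.const_mul F4),
    MeasureTheory.integral_const_mul, sech_integral_C, mul_one, sub_eq_zero] at hintzero
  exact hintzero
end

section
/- ∫_{0}^{∞} e^{-b v²} (cos(b v) + 2 v sin(b v)) / (4 v² + 1) dv = (π/4) e^{-b/4} for every real b ≥ 0. -/
open Real MeasureTheory

open Set Filter Topology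

noncomputable def myf (b v : ℝ) : ℝ :=
  Real.exp (-b * v ^ 2) * (Real.cos (b * v) + 2 * v * Real.sin (b * v)) / (4 * v ^ 2 + 1)

noncomputable def myf' (b v : ℝ) : ℝ :=
  Real.exp (-b * v ^ 2) * (v ^ 2 * Real.cos (b * v) - (v + 2 * v ^ 3) * Real.sin (b * v)) /
    (4 * v ^ 2 + 1)

lemma denom_pos (v : ℝ) : (0:ℝ) < 4 * v ^ 2 + 1 := by positivity

lemma myf_cont_v (b : ℝ) : Continuous (myf b) := by
  apply Continuous.div
  · fun_prop
  · fun_prop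
  · intro v; exact (denom_pos v).ne'

lemma myf_cont_b (v : ℝ) : Continuous (fun b => myf b v) := by
  apply Continuous.div
  · fun_prop
  · fun_prop
  · intro b; exact (denom_pos v).ne'

lemma abs_myf_le {b : ℝ} (hb : 0 ≤ b) {v : ℝ} (hv : 0 ≤ v) : |myf b v| ≤ 3 * (1 + v ^ 2)⁻¹ := by
  have h1 : (0:ℝ) < 1 + v ^ 2 := by positivity
  have h2 : (1:ℝ) + v ^ 2 ≤ 4 * v ^ 2 + 1 := by nlinarith
  have hexp : Real.exp (-b * v ^ 2) ≤ 1 := by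
    apply Real.exp_le_one_iff.mpr; nlinarith
  have hxe : b * v ^ 2 * Real.exp (-(b * v ^ 2)) ≤ 1 := by
    have := Real.add_one_le_exp (b * v ^ 2)
    have h3 : 0 < Real.exp (b * v ^ 2) := Real.exp_pos _
    rw [Real.exp_neg]
    rw [mul_inv_le_iff₀ h3, one_mul]
    nlinarith
  have hnum : |Real.exp (-b * v ^ 2) * (Real.cos (b * v) + 2 * v * Real.sin (b * v))| ≤ 3 := by
    have hc : |Real.cos (b * v)| ≤ 1 := Real.abs_cos_le_one _
    have hs2 : |Real.sin (b * v)| ≤ |b * v| := Real.abs_sin_le_abs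
    have hbv : |b * v| = b * v := abs_of_nonneg (by positivity)
    have hE : 0 < Real.exp (-b * v ^ 2) := Real.exp_pos _
    rw [abs_mul, abs_of_pos hE]
    have h4 : |Real.cos (b * v) + 2 * v * Real.sin (b * v)| ≤ 1 + 2 * v * (b * v) := by
      calc |Real.cos (b * v) + 2 * v * Real.sin (b * v)|
          ≤ |Real.cos (b * v)| + |2 * v * Real.sin (b * v)| := abs_add_le _ _
        _ ≤ 1 + 2 * v * (b * v) := by
            rw [abs_mul, abs_of_nonneg (by positivity : (0:ℝ) ≤ 2 * v)]
            have := hs2.trans_eq hbv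
            nlinarith
    calc Real.exp (-b * v ^ 2) * |Real.cos (b * v) + 2 * v * Real.sin (b * v)|
        ≤ Real.exp (-b * v ^ 2) * (1 + 2 * v * (b * v)) := by
          exact mul_le_mul_of_nonneg_left h4 hE.le
      _ = Real.exp (-(b * v ^ 2)) + 2 * (b * v ^ 2 * Real.exp (-(b * v ^ 2))) := by
          rw [neg_mul]; ring
      _ ≤ 1 + 2 * 1 := by
          have hexp' : Real.exp (-(b * v ^ 2)) ≤ 1 := by
            exact Real.exp_le_one_iff.mpr (neg_nonpos.mpr (by positivity))
          linarith
      _ = 3 := by norm_num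
  rw [myf, abs_div, abs_of_pos (denom_pos v)]
  rw [div_le_iff₀ (denom_pos v)]
  have hu : (1 + v ^ 2)⁻¹ * (1 + v ^ 2) = 1 := inv_mul_cancel₀ h1.ne'
  have h5 : (0:ℝ) < (1 + v ^ 2)⁻¹ := by positivity
  have : (3:ℝ) ≤ 3 * (1 + v ^ 2)⁻¹ * (4 * v ^ 2 + 1) := by nlinarith
  linarith [hnum]

lemma bound0_integrable : IntegrableOn (fun v : ℝ => 3 * (1 + v ^ 2)⁻¹) (Ioi 0) :=
  (integrable_inv_one_add_sq.const_mul 3).integrableOn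

lemma myf_integrable {b : ℝ} (hb : 0 ≤ b) : IntegrableOn (myf b) (Ioi 0) := by
  apply Integrable.mono' bound0_integrable ((myf_cont_v b).aestronglyMeasurable)
  filter_upwards [ae_restrict_mem measurableSet_Ioi] with v hv
  exact (abs_myf_le hb (le_of_lt hv)).trans_eq' (Real.norm_eq_abs _)

lemma myF_zero : ∫ v in Ioi (0:ℝ), myf 0 v = π / 4 := by
  have h : ∀ v : ℝ, myf 0 v = (fun x : ℝ => (1 + x ^ 2)⁻¹) (2 * v) := by
    intro v
    simp only [myf]
    rw [neg_zero, zero_mul, zero_mul, Real.exp_zero, Real.cos_zero, Real.sin_zero]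
    rw [inv_eq_one_div]
    ring_nf
  calc ∫ v in Ioi (0:ℝ), myf 0 v
      = ∫ v in Ioi (0:ℝ), (fun x : ℝ => (1 + x ^ 2)⁻¹) (2 * v) := by
        exact integral_congr_ae (Filter.Eventually.of_forall (fun v => h v))
    _ = (2:ℝ)⁻¹ • ∫ x in Ioi (2 * 0 : ℝ), (1 + x ^ 2)⁻¹ := by
        exact integral_comp_mul_left_Ioi (fun x : ℝ => (1 + x ^ 2)⁻¹) 0 two_pos
    _ = π / 4 := by
        norm_num [integral_Ioi_inv_one_add_sq]
        ring

lemma myf_hasDerivAt (v b : ℝ) : HasDerivAt (fun b => myf b v) (myf' b v) b := by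
  have h0 : HasDerivAt (fun b : ℝ => -b * v ^ 2) (-v ^ 2) b := by
    simpa using ((hasDerivAt_id b).neg.mul_const (v ^ 2))
  have h1 : HasDerivAt (fun b : ℝ => Real.exp (-b * v ^ 2))
      (-v ^ 2 * Real.exp (-b * v ^ 2)) b := by
    convert h0.exp using 1; ring
  have hbv : HasDerivAt (fun b : ℝ => b * v) v b := by
    simpa using (hasDerivAt_id b).mul_const v
  have h2 : HasDerivAt (fun b : ℝ => Real.cos (b * v) + 2 * v * Real.sin (b * v))
      (-v * Real.sin (b * v) + 2 * v * (v * Real.cos (b * v))) b := by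
    have hc := hbv.cos
    have hs := (hbv.sin).const_mul (2 * v)
    exact (hc.add hs).congr_deriv (by ring)
  have h3 := (h1.mul h2).div_const (4 * v ^ 2 + 1)
  refine h3.congr_deriv ?_
  simp only [myf']
  field_simp
  ring

lemma boundD_integrable {c : ℝ} (hc : 0 < c) :
    IntegrableOn (fun v : ℝ => Real.exp (-c * v ^ 2) * (v ^ 2 + v + 2 * v ^ 3)) (Ioi 0) := by
  have h2 : IntegrableOn (fun v : ℝ => v ^ (2:ℝ) * Real.exp (-c * v ^ 2)) (Ioi 0) :=
    integrableOn_rpow_mul_exp_neg_mul_sq hc (by norm_num)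
  have h1 : IntegrableOn (fun v : ℝ => v ^ (1:ℝ) * Real.exp (-c * v ^ 2)) (Ioi 0) :=
    integrableOn_rpow_mul_exp_neg_mul_sq hc (by norm_num)
  have h3 : IntegrableOn (fun v : ℝ => v ^ (3:ℝ) * Real.exp (-c * v ^ 2)) (Ioi 0) :=
    integrableOn_rpow_mul_exp_neg_mul_sq hc (by norm_num)
  have := (h2.add h1).add (h3.const_mul 2)
  apply IntegrableOn.congr_fun this ?_ measurableSet_Ioi
  intro v hv
  have e1 : v ^ (1:ℝ) = v ^ (1:ℕ) := by rw [← Real.rpow_natCast]; norm_num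
  have e2 : v ^ (2:ℝ) = v ^ (2:ℕ) := by rw [← Real.rpow_natCast]; norm_num
  have e3 : v ^ (3:ℝ) = v ^ (3:ℕ) := by rw [← Real.rpow_natCast]; norm_num
  simp only [Pi.add_apply, e1, e2, e3]
  ring

lemma abs_myf'_le {x : ℝ} {c : ℝ} (hc : 0 < c) (hx : c ≤ x) {v : ℝ} (hv : 0 ≤ v) :
    ‖myf' x v‖ ≤ Real.exp (-c * v ^ 2) * (v ^ 2 + v + 2 * v ^ 3) := by
  rw [Real.norm_eq_abs, myf', abs_div, abs_of_pos (denom_pos v), abs_mul,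
    abs_of_pos (Real.exp_pos _)]
  have hexp : Real.exp (-x * v ^ 2) ≤ Real.exp (-c * v ^ 2) := by
    apply Real.exp_le_exp.mpr; nlinarith
  have hnum : |v ^ 2 * Real.cos (x * v) - (v + 2 * v ^ 3) * Real.sin (x * v)| ≤
      v ^ 2 + v + 2 * v ^ 3 := by
    have hc1 : |Real.cos (x * v)| ≤ 1 := Real.abs_cos_le_one _
    have hs1 : |Real.sin (x * v)| ≤ 1 := Real.abs_sin_le_one _
    calc |v ^ 2 * Real.cos (x * v) - (v + 2 * v ^ 3) * Real.sin (x * v)|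
        ≤ |v ^ 2 * Real.cos (x * v)| + |(v + 2 * v ^ 3) * Real.sin (x * v)| := abs_sub _ _
      _ ≤ v ^ 2 + v + 2 * v ^ 3 := by
          rw [abs_mul, abs_mul, abs_of_nonneg (by positivity : (0:ℝ) ≤ v ^ 2),
            abs_of_nonneg (by positivity : (0:ℝ) ≤ v + 2 * v ^ 3)]
          have t1 := mul_le_mul_of_nonneg_left hc1 (by positivity : (0:ℝ) ≤ v ^ 2)
          have t2 := mul_le_mul_of_nonneg_left hs1 (by positivity : (0:ℝ) ≤ v + 2 * v ^ 3)
          linarith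
  have h1 : (0:ℝ) ≤ v ^ 2 + v + 2 * v ^ 3 := by positivity
  calc Real.exp (-x * v ^ 2) * |v ^ 2 * Real.cos (x * v) - (v + 2 * v ^ 3) * Real.sin (x * v)| /
        (4 * v ^ 2 + 1)
      ≤ Real.exp (-x * v ^ 2) * |v ^ 2 * Real.cos (x * v) - (v + 2 * v ^ 3) * Real.sin (x * v)| := by
        apply div_le_self (by positivity)
        nlinarith [sq_nonneg v]
    _ ≤ Real.exp (-c * v ^ 2) * (v ^ 2 + v + 2 * v ^ 3) := by
        exact mul_le_mul hexp hnum (abs_nonneg _) (Real.exp_pos _).le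

lemma int_total_deriv {b : ℝ} (hb : 0 < b) :
    ∫ v in Ioi (0:ℝ), Real.exp (-b * v ^ 2) * (Real.cos (b * v) - 2 * v * Real.sin (b * v)) = 0 := by
  set g : ℝ → ℝ := fun v => b⁻¹ * (Real.exp (-b * v ^ 2) * Real.sin (b * v)) with hg
  set g' : ℝ → ℝ := fun v =>
    Real.exp (-b * v ^ 2) * (Real.cos (b * v) - 2 * v * Real.sin (b * v)) with hg'
  have hderiv : ∀ v : ℝ, HasDerivAt g (g' v) v := by
    intro v
    have h0 : HasDerivAt (fun v : ℝ => -b * v ^ 2) (-b * (2 * v)) v := by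
      have := (hasDerivAt_pow 2 v).const_mul (-b)
      exact this.congr_deriv (by ring)
    have h1 : HasDerivAt (fun v : ℝ => Real.exp (-b * v ^ 2))
        (-b * (2 * v) * Real.exp (-b * v ^ 2)) v := by
      convert h0.exp using 1; ring
    have hbv : HasDerivAt (fun v : ℝ => b * v) b v := by
      simpa using (hasDerivAt_id v).const_mul b
    have h2 := hbv.sin
    have h3 := ((h1.mul h2).const_mul b⁻¹)
    refine h3.congr_deriv ?_
    simp only [hg']
    field_simp
    ring
  have hint : IntegrableOn g' (Ioi 0) := by
    have hbd : IntegrableOn (fun v : ℝ => Real.exp (-b * v ^ 2) + 2 * (v * Real.exp (-b * v ^ 2)))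
        (Ioi 0) :=
      ((integrable_exp_neg_mul_sq hb).add ((integrable_mul_exp_neg_mul_sq hb).const_mul 2)).integrableOn
    apply Integrable.mono' hbd
    · exact (Continuous.aestronglyMeasurable (by fun_prop))
    · filter_upwards [ae_restrict_mem measurableSet_Ioi] with v hv
      have hv' : (0:ℝ) ≤ v := le_of_lt hv
      rw [Real.norm_eq_abs, hg', abs_mul, abs_of_pos (Real.exp_pos _)]
      have h4 : |Real.cos (b * v) - 2 * v * Real.sin (b * v)| ≤ 1 + 2 * v := by
        have hc1 : |Real.cos (b * v)| ≤ 1 := Real.abs_cos_le_one _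
        have hs1 : |Real.sin (b * v)| ≤ 1 := Real.abs_sin_le_one _
        calc |Real.cos (b * v) - 2 * v * Real.sin (b * v)|
            ≤ |Real.cos (b * v)| + |2 * v * Real.sin (b * v)| := abs_sub _ _
          _ ≤ 1 + 2 * v := by
              rw [abs_mul, abs_of_nonneg (by positivity : (0:ℝ) ≤ 2 * v)]
              have := mul_le_mul_of_nonneg_left hs1 (by positivity : (0:ℝ) ≤ 2 * v)
              linarith
      calc Real.exp (-b * v ^ 2) * |Real.cos (b * v) - 2 * v * Real.sin (b * v)|
          ≤ Real.exp (-b * v ^ 2) * (1 + 2 * v) :=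
            mul_le_mul_of_nonneg_left h4 (Real.exp_pos _).le
        _ = Real.exp (-b * v ^ 2) + 2 * (v * Real.exp (-b * v ^ 2)) := by ring
  have htend : Tendsto g atTop (𝓝 0) := by
    have hmaj : Tendsto (fun v : ℝ => b⁻¹ * Real.exp (-b * v ^ 2)) atTop (𝓝 0) := by
      have h6 : Tendsto (fun v : ℝ => b * v ^ 2) atTop atTop :=
        (tendsto_pow_atTop (by norm_num : 2 ≠ 0)).const_mul_atTop hb
      have h5 : Tendsto (fun v : ℝ => -b * v ^ 2) atTop atBot := by
        rw [show (fun v : ℝ => -b * v ^ 2) = (fun v : ℝ => -(b * v ^ 2)) from by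
          funext v; ring]
        exact tendsto_neg_atBot_iff.mpr h6
      have := (Real.tendsto_exp_atBot).comp h5
      simpa using this.const_mul b⁻¹
    apply squeeze_zero_norm ?_ hmaj
    intro v
    rw [hg, Real.norm_eq_abs, abs_mul, abs_mul, abs_of_pos (Real.exp_pos _),
      abs_of_pos (inv_pos.mpr hb)]
    have hs := Real.abs_sin_le_one (b * v)
    have t1 := mul_le_mul_of_nonneg_left hs (Real.exp_pos (-b * v ^ 2)).le
    have t2 := mul_le_mul_of_nonneg_left t1 (inv_pos.mpr hb).le
    calc b⁻¹ * (Real.exp (-b * v ^ 2) * |Real.sin (b * v)|)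
        ≤ b⁻¹ * (Real.exp (-b * v ^ 2) * 1) := t2
      _ = b⁻¹ * Real.exp (-b * v ^ 2) := by ring
  have := integral_Ioi_of_hasDerivAt_of_tendsto
    (f := g) (f' := g') (a := 0) ((hderiv 0).continuousAt.continuousWithinAt)
    (fun x _ => hderiv x) hint htend
  rw [hg'] at this
  rw [this, hg]
  simp

lemma gprime_integrable {b : ℝ} (hb : 0 < b) :
    IntegrableOn (fun v : ℝ => Real.exp (-b * v ^ 2) * (Real.cos (b * v) - 2 * v * Real.sin (b * v)))
      (Ioi 0) := by
  have hbd : IntegrableOn (fun v : ℝ => Real.exp (-b * v ^ 2) + 2 * (v * Real.exp (-b * v ^ 2)))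
      (Ioi 0) :=
    ((integrable_exp_neg_mul_sq hb).add ((integrable_mul_exp_neg_mul_sq hb).const_mul 2)).integrableOn
  apply Integrable.mono' hbd
  · exact (Continuous.aestronglyMeasurable (by fun_prop))
  · filter_upwards [ae_restrict_mem measurableSet_Ioi] with v hv
    have hv' : (0:ℝ) ≤ v := le_of_lt hv
    rw [Real.norm_eq_abs, abs_mul, abs_of_pos (Real.exp_pos _)]
    have h4 : |Real.cos (b * v) - 2 * v * Real.sin (b * v)| ≤ 1 + 2 * v := by
      have hc1 : |Real.cos (b * v)| ≤ 1 := Real.abs_cos_le_one _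
      have hs1 : |Real.sin (b * v)| ≤ 1 := Real.abs_sin_le_one _
      calc |Real.cos (b * v) - 2 * v * Real.sin (b * v)|
          ≤ |Real.cos (b * v)| + |2 * v * Real.sin (b * v)| := abs_sub _ _
        _ ≤ 1 + 2 * v := by
            rw [abs_mul, abs_of_nonneg (by positivity : (0:ℝ) ≤ 2 * v)]
            have := mul_le_mul_of_nonneg_left hs1 (by positivity : (0:ℝ) ≤ 2 * v)
            linarith
    calc Real.exp (-b * v ^ 2) * |Real.cos (b * v) - 2 * v * Real.sin (b * v)|
        ≤ Real.exp (-b * v ^ 2) * (1 + 2 * v) :=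
          mul_le_mul_of_nonneg_left h4 (Real.exp_pos _).le
      _ = Real.exp (-b * v ^ 2) + 2 * (v * Real.exp (-b * v ^ 2)) := by ring

noncomputable def auxF (b : ℝ) : ℝ := ∫ v in Ioi (0:ℝ), myf b v

lemma myf'_eq (b v : ℝ) :
    myf' b v = (1/4) * (Real.exp (-b * v ^ 2) * (Real.cos (b * v) - 2 * v * Real.sin (b * v)))
      - (1/4) * myf b v := by
  simp only [myf', myf]
  field_simp
  ring

lemma auxF_hasDerivAt {b : ℝ} (hb : 0 < b) : HasDerivAt auxF (-(auxF b) / 4) b := by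
  have key := hasDerivAt_integral_of_dominated_loc_of_deriv_le
    (μ := (volume : Measure ℝ).restrict (Ioi 0)) (x₀ := b)
    (F := fun x v => myf x v) (F' := fun x v => myf' x v)
    (bound := fun v => Real.exp (-(b/2) * v ^ 2) * (v ^ 2 + v + 2 * v ^ 3))
    (Metric.ball_mem_nhds b (half_pos hb))
    (Filter.Eventually.of_forall fun x => (myf_cont_v x).aestronglyMeasurable)
    (myf_integrable hb.le)
    ((Continuous.aestronglyMeasurable (by
      apply Continuous.div
      · fun_prop
      · fun_prop
      · intro v; exact (denom_pos v).ne')))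
    ?_ ((boundD_integrable (half_pos hb)))
    (Filter.Eventually.of_forall fun v x _ => myf_hasDerivAt v x)
  · obtain ⟨hint', hderiv⟩ := key
    have : (∫ v in Ioi (0:ℝ), myf' b v) = -(auxF b) / 4 := by
      have hid : ∀ᵐ v ∂((volume : Measure ℝ).restrict (Ioi 0)),
          myf' b v = (1/4) * (Real.exp (-b * v ^ 2) * (Real.cos (b * v) - 2 * v * Real.sin (b * v)))
            - (1/4) * myf b v := Filter.Eventually.of_forall fun v => myf'_eq b v
      rw [integral_congr_ae hid, integral_sub ((gprime_integrable hb).const_mul _)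
        ((myf_integrable hb.le).const_mul _), MeasureTheory.integral_const_mul, MeasureTheory.integral_const_mul,
        int_total_deriv hb]
      simp only [auxF]
      ring
    rw [← this]
    exact hderiv
  · filter_upwards [ae_restrict_mem measurableSet_Ioi] with v hv
    intro x hx
    rw [Metric.mem_ball, Real.dist_eq, abs_sub_lt_iff] at hx
    exact abs_myf'_le (half_pos hb) (by linarith [hx.2]) (le_of_lt hv)

lemma auxF_tendsto : Tendsto auxF (𝓝[>] (0:ℝ)) (𝓝 (π/4)) := by
  rw [show (π/4 : ℝ) = ∫ v in Ioi (0:ℝ), myf 0 v from myF_zero.symm]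
  apply tendsto_integral_filter_of_dominated_convergence (fun v : ℝ => 3 * (1 + v ^ 2)⁻¹)
  · exact Filter.Eventually.of_forall fun x => (myf_cont_v x).aestronglyMeasurable
  · filter_upwards [self_mem_nhdsWithin] with x hx
    filter_upwards [ae_restrict_mem measurableSet_Ioi] with v hv
    exact (abs_myf_le (le_of_lt hx) (le_of_lt hv)).trans_eq' (Real.norm_eq_abs _)
  · exact bound0_integrable
  · filter_upwards [ae_restrict_mem measurableSet_Ioi] with v hv
    exact ((myf_cont_b v).tendsto 0).mono_left nhdsWithin_le_nhds

lemma auxF_eq {b : ℝ} (hb : 0 < b) : auxF b = π / 4 * Real.exp (-b / 4) := by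
  set H : ℝ → ℝ := fun x => auxF x * Real.exp (x / 4) with hH
  have hHd : ∀ x ∈ Ioi (0:ℝ), HasDerivAt H 0 x := by
    intro x hx
    have h1 := auxF_hasDerivAt hx
    have h2 : HasDerivAt (fun x : ℝ => Real.exp (x / 4)) (Real.exp (x / 4) * (1/4)) x := by
      have := ((hasDerivAt_id x).div_const 4).exp
      convert this using 1 <;> simp [div_eq_mul_inv]
    have := h1.mul h2
    exact this.congr_deriv (by ring)
  have hconst : ∀ ε, 0 < ε → ε ≤ b → H b = H ε := by
    intro ε hε hεb
    have hcont : ContinuousOn H (Icc ε b) := fun x hx =>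
      ((hHd x (lt_of_lt_of_le hε hx.1)).continuousAt).continuousWithinAt
    have := constant_of_has_deriv_right_zero hcont (fun x hx =>
      (hHd x (lt_of_lt_of_le hε hx.1)).hasDerivWithinAt)
    exact this b ⟨hεb, le_rfl⟩
  have h1 : Tendsto H (𝓝[>] (0:ℝ)) (𝓝 (π/4 * 1)) := by
    apply Tendsto.mul auxF_tendsto
    have : Tendsto (fun x : ℝ => Real.exp (x / 4)) (𝓝 0) (𝓝 (Real.exp (0/4))) :=
      (Real.continuous_exp.comp (continuous_id.div_const 4)).tendsto 0
    simpa using this.mono_left nhdsWithin_le_nhds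
  have h2 : Tendsto H (𝓝[>] (0:ℝ)) (𝓝 (H b)) := by
    apply Tendsto.congr' ?_ tendsto_const_nhds
    filter_upwards [Ioc_mem_nhdsGT_of_mem ⟨le_rfl, hb⟩] with x hx
    exact (hconst x hx.1 hx.2)
  have hHb : H b = π/4 := by
    have := tendsto_nhds_unique h2 h1
    simpa using this
  have hE : Real.exp (b / 4) ≠ 0 := (Real.exp_pos _).ne'
  have : auxF b = π/4 / Real.exp (b / 4) := by
    rw [eq_div_iff hE]; exact hHb
  rw [this, div_eq_mul_inv, ← Real.exp_neg, neg_div]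

theorem integral_exp_cos_sin_div_quadratic (b : ℝ) (hb : 0 ≤ b) :
    ∫ v in Set.Ioi (0 : ℝ),
      Real.exp (-b * v ^ 2) * (Real.cos (b * v) + 2 * v * Real.sin (b * v)) / (4 * v ^ 2 + 1)
      = (Real.pi / 4) * Real.exp (-b / 4) := by
  have h : (∫ v in Set.Ioi (0 : ℝ),
      Real.exp (-b * v ^ 2) * (Real.cos (b * v) + 2 * v * Real.sin (b * v)) / (4 * v ^ 2 + 1))
      = auxF b := rfl
  rw [h]
  rcases eq_or_lt_of_le hb with rfl | hb'
  · rw [show auxF 0 = π/4 from myF_zero]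
    norm_num
  · exact auxF_eq hb'
end

section
/- For positive reals a, b, ∫_{−∞}^{∞} (3 a x − 2 b) x / ( (a² x⁴ + (a x − b)²)(4 x² + 1) ) dx = 2 a π / (a² + 16 b²). -/
open Real MeasureTheory Filter Set Topology

private lemma irat_bound (a b : ℝ) (ha : 0 < a) (hb : 0 < b) (x : ℝ) :
    |(3*a*x - 2*b)*x| * (a^2*b^4) ≤ (3*a+2*b)*(b^4+4*a^2*b^2+16*a^4) * (a^2*x^4+(a*x-b)^2) := by
  have hs : 0 ≤ |x| := abs_nonneg x
  have hs2 : |x|^2 = x^2 := sq_abs x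
  have h1 : |(3*a*x - 2*b)*x| ≤ 3*a*x^2 + 2*b*|x| := by
    rcases abs_cases ((3*a*x-2*b)*x) with ⟨h,_⟩|⟨h,_⟩ <;>
      rcases abs_cases x with ⟨h2,h3⟩|⟨h2,h3⟩ <;> rw [h, h2] <;>
      nlinarith [mul_nonneg ha.le (sq_nonneg x), mul_pos ha hb, sq_nonneg x]
  set s := |x| with hsdef
  set T := |(3*a*x - 2*b)*x| with hTdef
  have hT0 : 0 ≤ T := abs_nonneg _
  rcases le_total (x^2) 1 with hx1 | hx1
  · have hsle : s ≤ 1 := by nlinarith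
    have e0 : 3*a*x^2 + 2*b*s ≤ 3*a+2*b := by
      nlinarith [mul_nonneg ha.le (sub_nonneg.2 hx1), mul_nonneg hb.le (sub_nonneg.2 hsle)]
    have e1 : T*(a^2*b^4) ≤ (3*a+2*b)*(a^2*b^4) :=
      mul_le_mul_of_nonneg_right (h1.trans e0) (by positivity)
    rcases le_total (4*a^2*x^2) (b^2) with hx2 | hx2
    · have hD : b^2/4 ≤ (a*x-b)^2 := by
        rcases le_total x 0 with hx0 | hx0
        · nlinarith
        · have h2ax : 2*a*x ≤ b := by nlinarith
          nlinarith [mul_nonneg (sub_nonneg.2 h2ax) (by nlinarith : 0 ≤ 3*b/2 - a*x)]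
      have e3 := mul_le_mul_of_nonneg_left hD (show (0:ℝ) ≤ (3*a+2*b)*(4*a^2*b^2) by positivity)
      calc T*(a^2*b^4) ≤ (3*a+2*b)*(a^2*b^4) := e1
        _ = ((3*a+2*b)*(4*a^2*b^2))*(b^2/4) := by ring
        _ ≤ ((3*a+2*b)*(4*a^2*b^2))*((a*x-b)^2) := e3
        _ ≤ ((3*a+2*b)*(4*a^2*b^2))*((a*x-b)^2)
            + (3*a+2*b)*((b^4+16*a^4)*(a*x-b)^2 + (b^4+4*a^2*b^2+16*a^4)*(a^2*x^4)) :=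
            le_add_of_nonneg_right (by positivity)
        _ = (3*a+2*b)*(b^4+4*a^2*b^2+16*a^4) * (a^2*x^4+(a*x-b)^2) := by ring
    · have hD : b^4/(16*a^2) ≤ a^2*x^4 := by
        have h5 : b^2/(4*a^2) ≤ x^2 := by rw [div_le_iff₀ (by positivity)]; nlinarith
        have h6 : b^2/(4*a^2)*(b^2/(4*a^2)) ≤ x^2*x^2 :=
          mul_le_mul h5 h5 (by positivity) (sq_nonneg x)
        calc b^4/(16*a^2) = a^2 * (b^2/(4*a^2)*(b^2/(4*a^2))) := by field_simp; ring
          _ ≤ a^2 * (x^2*x^2) := by nlinarith [sq_nonneg a]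
          _ = a^2*x^4 := by ring
      have e3 := mul_le_mul_of_nonneg_left hD (show (0:ℝ) ≤ (3*a+2*b)*(16*a^4) by positivity)
      calc T*(a^2*b^4) ≤ (3*a+2*b)*(a^2*b^4) := e1
        _ = ((3*a+2*b)*(16*a^4))*(b^4/(16*a^2)) := by field_simp
        _ ≤ ((3*a+2*b)*(16*a^4))*(a^2*x^4) := e3
        _ ≤ ((3*a+2*b)*(16*a^4))*(a^2*x^4)
            + (3*a+2*b)*((b^4+4*a^2*b^2)*(a^2*x^4) + (b^4+4*a^2*b^2+16*a^4)*((a*x-b)^2)) :=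
            le_add_of_nonneg_right (by positivity)
        _ = (3*a+2*b)*(b^4+4*a^2*b^2+16*a^4) * (a^2*x^4+(a*x-b)^2) := by ring
  · have h1s : 1 ≤ s := by nlinarith
    have hsx : s ≤ x^2 := by nlinarith
    have hx4 : x^2 ≤ x^4 := by nlinarith [sq_nonneg x]
    have e0 : 3*a*x^2 + 2*b*s ≤ (3*a+2*b)*x^4 := by
      nlinarith [mul_nonneg ha.le (sub_nonneg.2 hx4),
        mul_nonneg hb.le (sub_nonneg.2 (hsx.trans hx4))]
    calc T*(a^2*b^4)
        ≤ ((3*a+2*b)*x^4)*(a^2*b^4) :=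
          mul_le_mul_of_nonneg_right (h1.trans e0) (by positivity)
      _ = ((3*a+2*b)*b^4)*(a^2*x^4) := by ring
      _ ≤ ((3*a+2*b)*b^4)*(a^2*x^4)
          + (3*a+2*b)*((4*a^2*b^2+16*a^4)*(a^2*x^4) + (b^4+4*a^2*b^2+16*a^4)*((a*x-b)^2)) :=
          le_add_of_nonneg_right (by positivity)
      _ = (3*a+2*b)*(b^4+4*a^2*b^2+16*a^4) * (a^2*x^4+(a*x-b)^2) := by ring

private lemma irat_deriv (a b : ℝ) (ha : 0 < a) (hb : 0 < b) (x : ℝ) :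
    HasDerivAt (fun y : ℝ =>
      (2*b/(a^2+16*b^2)) * (Real.log (a^2*y^4+(a*y-b)^2) - 2*Real.log (4*y^2+1))
      + (2*a/(a^2+16*b^2)) * Real.arctan (2*y)
      + (a/(a^2+16*b^2)) * (if y = 0 then -(π/2) else Real.arctan ((a*y-b)/(a*y^2))))
      ((3 * a * x - 2 * b) * x /
        ((a ^ 2 * x ^ 4 + (a * x - b) ^ 2) * (4 * x ^ 2 + 1))) x := by
  have hM : (0:ℝ) < a^2+16*b^2 := by positivity
  rcases eq_or_ne x 0 with rfl | hx
  · -- x = 0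
    have hD : (0:ℝ) < a^2*(0:ℝ)^4+(a*0-b)^2 := by norm_num; positivity
    have hQ : (0:ℝ) < 4*(0:ℝ)^2+1 := by norm_num
    have hlin : HasDerivAt (fun y : ℝ => a*y - b) a 0 := by
      simpa using ((hasDerivAt_id (0:ℝ)).const_mul a).sub_const b
    have hlinne : a*(0:ℝ) - b ≠ 0 := by simp; positivity
    have hpoly : HasDerivAt (fun y : ℝ => a^2*y^4+(a*y-b)^2) (4*a^2*0^3 + 2*a*(a*0-b)) 0 := by
      have h3 := ((hasDerivAt_pow 4 (0:ℝ)).const_mul (a^2)).add (hlin.pow 2)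
      refine h3.congr_deriv ?_
      push_cast
      ring
    have hQd : HasDerivAt (fun y : ℝ => 4*y^2+1) (8*0:ℝ) 0 := by
      have h3 := ((hasDerivAt_pow 2 (0:ℝ)).const_mul (4:ℝ)).add_const 1
      refine h3.congr_deriv ?_
      push_cast
      ring
    have hquad : HasDerivAt (fun y : ℝ => a*y^2) (a*(2*0):ℝ) 0 := by
      have h3 := (hasDerivAt_pow 2 (0:ℝ)).const_mul a
      refine h3.congr_deriv ?_
      push_cast
      ring
    have hlog1 := hpoly.log hD.ne'
    have hlog2 := hQd.log hQ.ne'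
    have harc1 : HasDerivAt (fun y : ℝ => Real.arctan (2*y)) (1/(1+(2*(0:ℝ))^2) * 2) 0 := by
      simpa using ((hasDerivAt_id (0:ℝ)).const_mul 2).arctan
    have hw : HasDerivAt (fun y : ℝ => (a*y^2)/(a*y-b))
        ((a*(2*0)*(a*0-b) - a*0^2*a)/(a*0-b)^2) 0 := hquad.div hlin hlinne
    have harc2 := (hw.arctan).const_sub (-(π/2))
    have hall := (((hlog1.sub (hlog2.const_mul 2)).const_mul (2*b/(a^2+16*b^2))).add
        (harc1.const_mul (2*a/(a^2+16*b^2)))).add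
        ((harc2).const_mul (a/(a^2+16*b^2)))
    have hev : (fun y : ℝ =>
        (2*b/(a^2+16*b^2)) * (Real.log (a^2*y^4+(a*y-b)^2) - 2*Real.log (4*y^2+1))
        + (2*a/(a^2+16*b^2)) * Real.arctan (2*y)
        + (a/(a^2+16*b^2)) * (if y = 0 then -(π/2) else Real.arctan ((a*y-b)/(a*y^2))))
        =ᶠ[𝓝 (0:ℝ)] (fun y : ℝ =>
        (2*b/(a^2+16*b^2)) * (Real.log (a^2*y^4+(a*y-b)^2) - 2*Real.log (4*y^2+1))
        + (2*a/(a^2+16*b^2)) * Real.arctan (2*y)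
        + (a/(a^2+16*b^2)) * (-(π/2) - Real.arctan ((a*y^2)/(a*y-b)))) := by
      have hneg : ∀ᶠ y in 𝓝 (0:ℝ), a*y - b < 0 := by
        have hc : ContinuousAt (fun y : ℝ => a*y - b) 0 := by fun_prop
        have h5 : Tendsto (fun y : ℝ => a*y - b) (𝓝 0) (𝓝 (a*0-b)) := hc.tendsto
        apply h5.eventually_lt_const
        simp; positivity
      filter_upwards [hneg] with y hy
      rcases eq_or_ne y 0 with rfl | hy0
      · simp
      · have hy2 : (0:ℝ) < a*y^2 := by positivity
        have ht : (a*y^2)/(a*y-b) < 0 := div_neg_of_pos_of_neg hy2 hy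
        have h7 := Real.arctan_inv_of_neg ht
        have hinv : ((a*y^2)/(a*y-b))⁻¹ = (a*y-b)/(a*y^2) := by rw [inv_div]
        rw [hinv] at h7
        rw [if_neg hy0, h7]
    have hfin := hall.congr_of_eventuallyEq hev
    refine hfin.congr_deriv ?_
    field_simp
    ring
  · -- x ≠ 0
    have hD : (0:ℝ) < a^2*x^4+(a*x-b)^2 := by
      have h4 : (0:ℝ) < x^4 := by positivity
      nlinarith [sq_nonneg (a*x-b), mul_pos (mul_pos ha ha) h4]
    have hQ : (0:ℝ) < 4*x^2+1 := by positivity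
    have hax2 : a*x^2 ≠ 0 := by positivity
    have hlin : HasDerivAt (fun y : ℝ => a*y - b) a x := by
      simpa using ((hasDerivAt_id x).const_mul a).sub_const b
    have hpoly : HasDerivAt (fun y : ℝ => a^2*y^4+(a*y-b)^2) (4*a^2*x^3 + 2*a*(a*x-b)) x := by
      have h3 := ((hasDerivAt_pow 4 x).const_mul (a^2)).add (hlin.pow 2)
      refine h3.congr_deriv ?_
      push_cast
      ring
    have hQd : HasDerivAt (fun y : ℝ => 4*y^2+1) (8*x) x := by
      have h3 := ((hasDerivAt_pow 2 x).const_mul (4:ℝ)).add_const 1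
      refine h3.congr_deriv ?_
      push_cast
      ring
    have hquad : HasDerivAt (fun y : ℝ => a*y^2) (a*(2*x)) x := by
      have h3 := (hasDerivAt_pow 2 x).const_mul a
      refine h3.congr_deriv ?_
      push_cast
      ring
    have hlog1 := hpoly.log hD.ne'
    have hlog2 := hQd.log hQ.ne'
    have harc1 : HasDerivAt (fun y : ℝ => Real.arctan (2*y)) (1/(1+(2*x)^2) * 2) x := by
      simpa using ((hasDerivAt_id x).const_mul 2).arctan
    have hw : HasDerivAt (fun y : ℝ => (a*y-b)/(a*y^2))
        ((a*(a*x^2) - (a*x-b)*(a*(2*x)))/(a*x^2)^2) x := hlin.div hquad hax2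
    have harc2 := hw.arctan
    have hall := (((hlog1.sub (hlog2.const_mul 2)).const_mul (2*b/(a^2+16*b^2))).add
        (harc1.const_mul (2*a/(a^2+16*b^2)))).add (harc2.const_mul (a/(a^2+16*b^2)))
    have hev : (fun y : ℝ =>
        (2*b/(a^2+16*b^2)) * (Real.log (a^2*y^4+(a*y-b)^2) - 2*Real.log (4*y^2+1))
        + (2*a/(a^2+16*b^2)) * Real.arctan (2*y)
        + (a/(a^2+16*b^2)) * (if y = 0 then -(π/2) else Real.arctan ((a*y-b)/(a*y^2))))
        =ᶠ[𝓝 x] (fun y : ℝ =>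
        (2*b/(a^2+16*b^2)) * (Real.log (a^2*y^4+(a*y-b)^2) - 2*Real.log (4*y^2+1))
        + (2*a/(a^2+16*b^2)) * Real.arctan (2*y)
        + (a/(a^2+16*b^2)) * (Real.arctan ((a*y-b)/(a*y^2)))) := by
      filter_upwards [eventually_ne_nhds hx] with y hy
      simp [hy]
    have hfin := hall.congr_of_eventuallyEq hev
    have heq : (2*b/(a^2+16*b^2)) * ((4*a^2*x^3 + 2*a*(a*x-b))/(a^2*x^4+(a*x-b)^2) - 2*((8*x)/(4*x^2+1)))
        + (2*a/(a^2+16*b^2)) * (1/(1+(2*x)^2) * 2)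
        + (a/(a^2+16*b^2)) * (1/(1+((a*x-b)/(a*x^2))^2) * ((a*(a*x^2) - (a*x-b)*(a*(2*x)))/(a*x^2)^2))
        = (3 * a * x - 2 * b) * x /
          ((a ^ 2 * x ^ 4 + (a * x - b) ^ 2) * (4 * x ^ 2 + 1)) := by
      have h1 : (1+((a*x-b)/(a*x^2))^2) = (a^2*x^4+(a*x-b)^2)/(a*x^2)^2 := by
        field_simp
      rw [h1]
      field_simp
      ring
    rw [← heq]
    exact hfin

theorem integral_rational_identity (a b : ℝ) (ha : 0 < a) (hb : 0 < b) :
    ∫ x : ℝ,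
      (3 * a * x - 2 * b) * x /
        ((a ^ 2 * x ^ 4 + (a * x - b) ^ 2) * (4 * x ^ 2 + 1))
      = 2 * a * Real.pi / (a ^ 2 + 16 * b ^ 2) := by
  have hM : (0:ℝ) < a^2+16*b^2 := by positivity
  have hD : ∀ x : ℝ, (0:ℝ) < a^2*x^4+(a*x-b)^2 := by
    intro x
    rcases eq_or_ne x 0 with rfl | hx
    · have : (0:ℝ) < b^2 := by positivity
      nlinarith
    · have h4 : (0:ℝ) < x^4 := by positivity
      nlinarith [sq_nonneg (a*x-b), mul_pos (mul_pos ha ha) h4]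
  have hQ : ∀ x : ℝ, (0:ℝ) < 4*x^2+1 := fun x => by positivity
  -- integrability
  have hint : Integrable (fun x : ℝ => (3 * a * x - 2 * b) * x /
      ((a ^ 2 * x ^ 4 + (a * x - b) ^ 2) * (4 * x ^ 2 + 1))) := by
    set K : ℝ := (3*a+2*b)*(b^4+4*a^2*b^2+16*a^4)/(a^2*b^4) with hK
    have hK0 : 0 ≤ K := by positivity
    have hcont : Continuous (fun x : ℝ => (3 * a * x - 2 * b) * x /
        ((a ^ 2 * x ^ 4 + (a * x - b) ^ 2) * (4 * x ^ 2 + 1))) := by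
      apply Continuous.div (by fun_prop) (by fun_prop)
      intro x
      exact (mul_pos (hD x) (hQ x)).ne'
    apply (integrable_inv_one_add_sq.const_mul K).mono' hcont.aestronglyMeasurable
    filter_upwards with x
    rw [Real.norm_eq_abs]
    have hnum : |(3*a*x - 2*b)*x| ≤ K * (a^2*x^4+(a*x-b)^2) := by
      rw [hK, div_mul_eq_mul_div, le_div_iff₀ (by positivity)]
      calc |(3*a*x - 2*b)*x| * (a^2*b^4)
          ≤ (3*a+2*b)*(b^4+4*a^2*b^2+16*a^4) * (a^2*x^4+(a*x-b)^2) := irat_bound a b ha hb x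
        _ = (3*a+2*b)*(b^4+4*a^2*b^2+16*a^4) * (a^2*x^4+(a*x-b)^2) := rfl
    have habs : |(3 * a * x - 2 * b) * x /
        ((a ^ 2 * x ^ 4 + (a * x - b) ^ 2) * (4 * x ^ 2 + 1))|
        = |(3*a*x - 2*b)*x| / ((a^2*x^4+(a*x-b)^2) * (4*x^2+1)) := by
      rw [abs_div, abs_of_pos (mul_pos (hD x) (hQ x))]
    rw [habs]
    have hstep : |(3*a*x - 2*b)*x| / ((a^2*x^4+(a*x-b)^2) * (4*x^2+1))
        ≤ (K * (a^2*x^4+(a*x-b)^2)) / ((a^2*x^4+(a*x-b)^2) * (1+x^2)) := by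
      apply div_le_div₀ (by positivity) hnum (mul_pos (hD x) (by positivity))
      have : (1:ℝ)+x^2 ≤ 4*x^2+1 := by nlinarith [sq_nonneg x]
      exact mul_le_mul_of_nonneg_left this (hD x).le
    have hstep2 : (K * (a^2*x^4+(a*x-b)^2)) / ((a^2*x^4+(a*x-b)^2) * (1+x^2))
        = K * (1+x^2)⁻¹ := by
      rw [mul_comm (a^2*x^4+(a*x-b)^2) (1+x^2), mul_comm K (a^2*x^4+(a*x-b)^2),
        mul_comm (1+x^2) (a^2*x^4+(a*x-b)^2), mul_div_mul_left _ _ (hD x).ne',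
        div_eq_mul_inv]
    exact hstep.trans (le_of_eq hstep2)
  -- limits at infinity
  have hinvbot : Tendsto (fun x : ℝ => x⁻¹) atBot (𝓝 0) := by
    have h1 : Tendsto (fun x : ℝ => -x) atBot atTop := tendsto_neg_atBot_atTop
    have h2 := (tendsto_inv_atTop_zero.comp h1).neg
    simp only [Function.comp] at h2
    have h3 : ∀ x : ℝ, -(-x)⁻¹ = x⁻¹ := fun x => by rw [inv_neg, neg_neg]
    simpa [h3] using h2
  have hlogcont : ContinuousAt (fun u : ℝ => Real.log ((a^2 + (a*u - b*u^2)^2)/(4+u^2)^2)) 0 := by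
    have hc1 : ContinuousAt (fun u : ℝ => (a^2 + (a*u - b*u^2)^2)/(4+u^2)^2) 0 :=
      ContinuousAt.div (by fun_prop) (by fun_prop) (by norm_num)
    have hne : ((a^2 + (a*0 - b*0^2)^2)/(4+(0:ℝ)^2)^2) ≠ 0 := by
      norm_num
      positivity
    exact (Real.continuousAt_log (by simpa using hne)).comp hc1
  have hlogeq : ∀ x : ℝ, x ≠ 0 →
      Real.log ((a^2 + (a*x⁻¹ - b*(x⁻¹)^2)^2)/(4+(x⁻¹)^2)^2)
      = Real.log (a^2*x^4+(a*x-b)^2) - 2*Real.log (4*x^2+1) := by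
    intro x hx
    have heq : (a^2 + (a*x⁻¹ - b*(x⁻¹)^2)^2)/(4+(x⁻¹)^2)^2
        = (a^2*x^4+(a*x-b)^2)/(4*x^2+1)^2 := by
      field_simp
    rw [heq, Real.log_div (hD x).ne' (by positivity), Real.log_pow]
    push_cast
    ring
  have hlogval : Real.log ((a^2 + (a*(0:ℝ) - b*(0:ℝ)^2)^2)/(4+(0:ℝ)^2)^2) = Real.log (a^2/16) := by
    norm_num
  have harctaneq : ∀ x : ℝ, x ≠ 0 →
      Real.arctan (x⁻¹ - (b/a)*(x⁻¹)^2) = Real.arctan ((a*x-b)/(a*x^2)) := by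
    intro x hx
    have harg : x⁻¹ - (b/a)*(x⁻¹)^2 = (a*x-b)/(a*x^2) := by field_simp
    rw [harg]
  have harccont : ContinuousAt (fun u : ℝ => Real.arctan (u - (b/a)*u^2)) 0 :=
    Real.continuous_arctan.continuousAt.comp (by fun_prop)
  have harcval : Real.arctan ((0:ℝ) - (b/a)*0^2) = 0 := by norm_num
  -- Tendsto at atTop
  have htop : Tendsto (fun x : ℝ =>
      (2*b/(a^2+16*b^2)) * (Real.log (a^2*x^4+(a*x-b)^2) - 2*Real.log (4*x^2+1))
      + (2*a/(a^2+16*b^2)) * Real.arctan (2*x)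
      + (a/(a^2+16*b^2)) * (if x = 0 then -(π/2) else Real.arctan ((a*x-b)/(a*x^2))))
      atTop (𝓝 ((2*b/(a^2+16*b^2)) * Real.log (a^2/16) + (2*a/(a^2+16*b^2)) * (π/2)
        + (a/(a^2+16*b^2)) * 0)) := by
    have hlog : Tendsto (fun x : ℝ => Real.log (a^2*x^4+(a*x-b)^2) - 2*Real.log (4*x^2+1))
        atTop (𝓝 (Real.log (a^2/16))) := by
      have hcomp := hlogcont.tendsto.comp tendsto_inv_atTop_zero
      simp only [Function.comp_def] at hcomp
      rw [hlogval] at hcomp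
      apply hcomp.congr'
      filter_upwards [eventually_ne_atTop (0:ℝ)] with x hx
      exact hlogeq x hx
    have harc : Tendsto (fun x : ℝ => Real.arctan (2*x)) atTop (𝓝 (π/2)) := by
      have h2 : Tendsto (fun x : ℝ => 2*x) atTop atTop :=
        Tendsto.const_mul_atTop two_pos tendsto_id
      exact (Real.tendsto_arctan_atTop.mono_right nhdsWithin_le_nhds).comp h2
    have hifa : Tendsto (fun x : ℝ => if x = 0 then -(π/2) else Real.arctan ((a*x-b)/(a*x^2)))
        atTop (𝓝 0) := by
      have hcomp := harccont.tendsto.comp tendsto_inv_atTop_zero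
      simp only [Function.comp_def] at hcomp
      rw [harcval] at hcomp
      apply hcomp.congr'
      filter_upwards [eventually_ne_atTop (0:ℝ)] with x hx
      rw [if_neg hx, ← harctaneq x hx]
    exact ((hlog.const_mul _).add (harc.const_mul _)).add (hifa.const_mul _)
  -- Tendsto at atBot
  have hbot : Tendsto (fun x : ℝ =>
      (2*b/(a^2+16*b^2)) * (Real.log (a^2*x^4+(a*x-b)^2) - 2*Real.log (4*x^2+1))
      + (2*a/(a^2+16*b^2)) * Real.arctan (2*x)
      + (a/(a^2+16*b^2)) * (if x = 0 then -(π/2) else Real.arctan ((a*x-b)/(a*x^2))))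
      atBot (𝓝 ((2*b/(a^2+16*b^2)) * Real.log (a^2/16) + (2*a/(a^2+16*b^2)) * (-(π/2))
        + (a/(a^2+16*b^2)) * 0)) := by
    have hlog : Tendsto (fun x : ℝ => Real.log (a^2*x^4+(a*x-b)^2) - 2*Real.log (4*x^2+1))
        atBot (𝓝 (Real.log (a^2/16))) := by
      have hcomp := hlogcont.tendsto.comp hinvbot
      simp only [Function.comp_def] at hcomp
      rw [hlogval] at hcomp
      apply hcomp.congr'
      filter_upwards [eventually_ne_atBot (0:ℝ)] with x hx
      exact hlogeq x hx
    have harc : Tendsto (fun x : ℝ => Real.arctan (2*x)) atBot (𝓝 (-(π/2))) := by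
      have h2 : Tendsto (fun x : ℝ => 2*x) atBot atBot :=
        Tendsto.const_mul_atBot two_pos tendsto_id
      exact (Real.tendsto_arctan_atBot.mono_right nhdsWithin_le_nhds).comp h2
    have hifa : Tendsto (fun x : ℝ => if x = 0 then -(π/2) else Real.arctan ((a*x-b)/(a*x^2)))
        atBot (𝓝 0) := by
      have hcomp := harccont.tendsto.comp hinvbot
      simp only [Function.comp_def] at hcomp
      rw [harcval] at hcomp
      apply hcomp.congr'
      filter_upwards [eventually_ne_atBot (0:ℝ)] with x hx
      rw [if_neg hx, ← harctaneq x hx]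
    exact ((hlog.const_mul _).add (harc.const_mul _)).add (hifa.const_mul _)
  have key := integral_of_hasDerivAt_of_tendsto (irat_deriv a b ha hb) hint hbot htop
  rw [key]
  field_simp
  ring
end

section
/- For a > 1/2 and a positive integer k with b = a + k, the series identity holds: Σ_{n=0}^{∞} (−1)^{n} / ∏_{j=0}^{k−1} (a + j − n²) = (1/2)·Γ(a)/Γ(a+k) + (π/(2(k−1)!)) Σ_{n=0}^{k−1} (−1)^{n} C(k−1,n) csc(π√(a+n)) / √(a+n), provided a + j − n² ≠ 0 for all n ≥ 0, 0 ≤ j ≤ k−1, and √(a+n) is never an integer for 0 ≤ n ≤ k−1. -/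
open Real Finset

lemma integral_exp_cos (z : ℝ) (hz : ∀ m : ℤ, z ≠ (m:ℝ)) (n : ℤ) :
    ∫ x in (0:ℝ)..(2*π), Complex.exp (-(n:ℂ) * Complex.I * x) * Complex.cos (z * ((x:ℂ) - π)) =
      2 * z * Complex.sin (π * z) / ((z:ℂ)^2 - (n:ℂ)^2) := by
  have hzn : (z:ℂ) - n ≠ 0 := by
    simpa [sub_eq_zero] using fun h => hz n (by exact_mod_cast congrArg Complex.re h)
  have hzn' : (z:ℂ) + n ≠ 0 := by
    have := hz (-n)
    simp only [Int.cast_neg] at this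
    intro h
    exact this (by exact_mod_cast congrArg Complex.re (eq_neg_of_add_eq_zero_left h))
  have h1 : (Complex.I * ((z:ℂ) - n)) ≠ 0 := by
    simp [Complex.I_ne_zero, hzn]
  have h2 : (-(Complex.I * ((z:ℂ) + n))) ≠ 0 := by
    simp [Complex.I_ne_zero, hzn']
  set E : ℂ := Complex.exp (Complex.I * z * π) with hE
  have hEne : E ≠ 0 := Complex.exp_ne_zero _
  have hEinv : Complex.exp (-(Complex.I * (z:ℂ) * π)) = E⁻¹ := by rw [Complex.exp_neg]
  have key : ∀ x : ℝ, Complex.exp (-(n:ℂ) * Complex.I * x) * Complex.cos (z * ((x:ℂ) - π))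
      = E⁻¹ / 2 * Complex.exp ((Complex.I * ((z:ℂ) - n)) * x)
        + E / 2 * Complex.exp ((-(Complex.I * ((z:ℂ) + n))) * x) := by
    intro x
    rw [Complex.cos, ← hEinv]
    rw [show ((z:ℂ) * ((x:ℂ) - π) * Complex.I) = (Complex.I * ((z:ℂ)) * x) + -(Complex.I*z*π) by ring,
        show (-((z:ℂ) * ((x:ℂ) - π)) * Complex.I) = -(Complex.I * ((z:ℂ)) * x) + Complex.I*z*π by ring]
    rw [Complex.exp_add, Complex.exp_add]
    rw [show (Complex.I * ((z:ℂ) - n)) * x = Complex.I * z * x + (-(n:ℂ) * Complex.I * x) by ring,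
        show (-(Complex.I * ((z:ℂ) + n))) * x = -(Complex.I * z * x) + (-(n:ℂ) * Complex.I * x) by ring]
    rw [Complex.exp_add, Complex.exp_add]
    ring
  have hint : ∀ c : ℂ, IntervalIntegrable (fun x : ℝ => Complex.exp (c * x)) MeasureTheory.volume 0 (2*π) :=
    fun c => (Complex.continuous_exp.comp (by fun_prop)).intervalIntegrable _ _
  rw [intervalIntegral.integral_congr (fun x _ => key x)]
  rw [intervalIntegral.integral_add ((hint _).const_mul _) ((hint _).const_mul _),
      intervalIntegral.integral_const_mul, intervalIntegral.integral_const_mul,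
      integral_exp_mul_complex h1, integral_exp_mul_complex h2]
  have hexpn : Complex.exp (-(n:ℂ) * (2*π*Complex.I)) = 1 := by
    simpa using Complex.exp_int_mul_two_pi_mul_I (-n)
  have e1 : Complex.exp (Complex.I * ((z:ℂ) - n) * ((2*π : ℝ):ℂ)) = E * E := by
    push_cast
    rw [show Complex.I * ((z:ℂ) - n) * (2*(π:ℂ)) = (Complex.I*z*π + Complex.I*z*π) + (-(n:ℂ)) * (2 * π * Complex.I) by ring,
        Complex.exp_add, Complex.exp_add, hexpn, mul_one]
  have e2 : Complex.exp (-(Complex.I * ((z:ℂ) + n)) * ((2*π:ℝ):ℂ)) = E⁻¹ * E⁻¹ := by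
    push_cast
    rw [show -(Complex.I * ((z:ℂ) + n)) * (2*(π:ℂ)) = (-(Complex.I*z*π) + -(Complex.I*z*π)) + (-(n:ℂ)) * (2 * π * Complex.I) by ring,
        Complex.exp_add, Complex.exp_add, hexpn, mul_one, hEinv]
  rw [e1, e2]
  push_cast
  rw [mul_zero, Complex.exp_zero, Complex.sin,
      show (-((π:ℂ) * z) * Complex.I) = -(Complex.I * (z:ℂ) * π) by ring,
      show (((π:ℂ) * z) * Complex.I) = Complex.I * (z:ℂ) * π by ring, hEinv, ← hE,
      show (z:ℂ)^2 - (n:ℂ)^2 = ((z:ℂ) - n) * ((z:ℂ) + n) by ring,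
      show (2 * (z:ℂ)) = ((z:ℂ) - n) + ((z:ℂ) + n) by ring]
  have hI := Complex.I_ne_zero
  have d1 : (2:ℂ) * (Complex.I*((z:ℂ)-n)) ≠ 0 := mul_ne_zero two_ne_zero (mul_ne_zero hI hzn)
  have d2 : (2:ℂ) * (-(Complex.I*((z:ℂ)+n))) ≠ 0 :=
    mul_ne_zero two_ne_zero (neg_ne_zero.mpr (mul_ne_zero hI hzn'))
  have d3 : ((z:ℂ)-n)*((z:ℂ)+n) ≠ 0 := mul_ne_zero hzn hzn'
  rw [div_mul_div_comm, div_mul_div_comm, div_add_div _ _ d1 d2,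
      div_eq_div_iff (mul_ne_zero d1 d2) d3]
  field_simp
  ring_nf
  simp only [Complex.I_sq, show Complex.I^3 = -Complex.I from by rw [pow_succ, Complex.I_sq]; ring]
  simp only [Complex.exp_zero]; ring

lemma csc_hasSum (z : ℝ) (hz : 0 < z) (hzi : ∀ m : ℤ, z ≠ (m:ℝ)) :
    HasSum (fun m : ℕ => (-1 : ℝ)^m / (z^2 - (m:ℝ)^2))
      (1/(2*z^2) + π/(2*z*Real.sin (π*z))) := by
  haveI : Fact (0 < 2*π) := ⟨by positivity⟩
  set g : ℝ → ℂ := fun x => Complex.cos (z*((x:ℂ) - π)) with hgdef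
  have contg : Continuous g := Complex.continuous_cos.comp (by fun_prop)
  have hg0 : g 0 = g (2*π) := by
    show Complex.cos ((z:ℂ)*(((0:ℝ):ℂ) - π)) = Complex.cos ((z:ℂ)*(((2*π:ℝ):ℂ) - π))
    push_cast
    rw [show (z:ℂ)*((0:ℂ) - π) = -((z:ℂ)*π) by ring, Complex.cos_neg,
        show (z:ℂ)*((2:ℂ)*π - π) = (z:ℂ)*π by ring]
  set f : C(AddCircle (2*π), ℂ) :=
    ⟨AddCircle.liftIco (2*π) 0 g, AddCircle.liftIco_zero_continuous hg0 contg.continuousOn⟩ with hfdef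
  have hsin : Real.sin (π*z) ≠ 0 := by
    rw [Real.sin_ne_zero_iff]
    intro m h
    exact hzi m (mul_right_cancel₀ Real.pi_ne_zero (by linarith [h]))
  have hz2 : ∀ i : ℤ, (z:ℂ)^2 - (i:ℂ)^2 ≠ 0 := by
    intro i h
    have h2 : ((z:ℂ) - i)*((z:ℂ) + i) = 0 := by linear_combination h
    rcases mul_eq_zero.mp h2 with h3 | h3
    · exact hzi i (by exact_mod_cast congrArg Complex.re (sub_eq_zero.mp h3))
    · exact hzi (-i) (by
        have := eq_neg_of_add_eq_zero_left h3
        push_cast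
        exact_mod_cast congrArg Complex.re this)
  have hcoeff : ∀ i : ℤ, fourierCoeff (⇑f) i
      = ((z:ℂ) * Complex.sin (π*z)) / (π*((z:ℂ)^2 - (i:ℂ)^2)) := by
    intro i
    rw [show ⇑f = AddCircle.liftIco (2*π) 0 g from rfl, fourierCoeff_liftIco_eq,
        fourierCoeffOn_eq_integral]
    have : ∀ x : ℝ, (fourier (-i) (x : AddCircle (0 + 2*π - 0)) : ℂ) • g x
        = Complex.exp (-(i:ℂ) * Complex.I * x) * Complex.cos (z * ((x:ℂ) - π)) := by
      intro x
      rw [fourier_coe_apply, smul_eq_mul, hgdef]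
      congr 2
      push_cast
      have hπ : (π:ℂ) ≠ 0 := Complex.ofReal_ne_zero.mpr Real.pi_ne_zero
      field_simp
      ring
    rw [intervalIntegral.integral_congr (fun x _ => this x)]
    simp only [zero_add, sub_zero]
    rw [integral_exp_cos z hzi i, Complex.real_smul]
    have hπ : (π:ℂ) ≠ 0 := Complex.ofReal_ne_zero.mpr Real.pi_ne_zero
    push_cast
    rw [div_mul_div_comm]
    rw [div_eq_div_iff (mul_ne_zero (mul_ne_zero two_ne_zero hπ) (hz2 i)) (mul_ne_zero hπ (hz2 i))]
    ring
  have hπ : (π:ℂ) ≠ 0 := Complex.ofReal_ne_zero.mpr Real.pi_ne_zero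
  have hsinC : Complex.sin ((π:ℂ)*z) ≠ 0 := by
    rw [show ((π:ℂ)*z) = ((π*z:ℝ):ℂ) by push_cast; ring, ← Complex.ofReal_sin]
    exact_mod_cast hsin
  have hreal : Summable (fun n : ℕ => (1:ℝ)/(z^2 - (n:ℝ)^2)) := by
    apply Summable.of_norm_bounded_eventually_nat (g := fun n => 2/(n:ℝ)^2)
    · simpa [div_eq_mul_inv] using (Real.summable_one_div_nat_pow.mpr one_lt_two).mul_left 2
    · filter_upwards [Filter.eventually_ge_atTop (⌈2*z⌉₊ + 1)] with n hn
      have h2z : 2*z ≤ (n:ℝ) := by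
        calc 2*z ≤ (⌈2*z⌉₊ : ℝ) := Nat.le_ceil _
        _ ≤ n := by exact_mod_cast Nat.le_of_succ_le hn
      have hn0 : (0:ℝ) < n := by linarith
      have hpos : 0 < (n:ℝ)^2 - z^2 := by nlinarith
      rw [Real.norm_eq_abs, abs_div, abs_one, abs_of_neg (by linarith : z^2 - (n:ℝ)^2 < 0)]
      rw [div_le_div_iff₀ (by linarith) (by positivity)]
      nlinarith
  have hnatsum : Summable (fun n : ℕ => ((z:ℂ) * Complex.sin ((π:ℂ)*z)) / ((π:ℂ)*((z:ℂ)^2 - (n:ℂ)^2))) := by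
    have := (Complex.summable_ofReal.mpr hreal).mul_left ((z:ℂ) * Complex.sin ((π:ℂ)*z) / π)
    apply this.congr
    intro n
    push_cast
    field_simp
  have hsummable : Summable (fourierCoeff (⇑f)) := by
    apply Summable.of_nat_of_neg
    · apply hnatsum.congr
      intro n
      rw [hcoeff]
      push_cast
      ring_nf
    · apply hnatsum.congr
      intro n
      rw [hcoeff]
      push_cast
      ring_nf
  have hfval : (⇑f) (((π:ℝ) : AddCircle (2*π))) = 1 := by
    show AddCircle.liftIco (2*π) 0 g ((π:ℝ) : AddCircle (2*π)) = 1
    rw [AddCircle.liftIco_coe_apply (by constructor <;> [positivity; linarith [Real.pi_pos]])]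
    show Complex.cos ((z:ℂ)*(((π:ℝ):ℂ) - π)) = 1
    simp
  have hfour : ∀ i : ℤ, (fourier i (((π:ℝ) : AddCircle (2*π))) : ℂ) = (-1)^i := by
    intro i
    rw [fourier_coe_apply]
    rw [show 2*(π:ℂ)*Complex.I*i*π/((2*π:ℝ):ℂ) = i*((π:ℂ)*Complex.I) by
      push_cast; field_simp]
    rw [Complex.exp_int_mul, Complex.exp_pi_mul_I]
  have H := has_pointwise_sum_fourier_series_of_summable hsummable (((π:ℝ) : AddCircle (2*π)))
  rw [hfval] at H
  simp only [hcoeff, hfour, smul_eq_mul] at H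
  have H2 := H.nat_add_neg
  have hneg1 : ∀ j : ℤ, ((-1:ℂ))^(-j) = (-1)^j := fun j => by
    rw [zpow_neg, ← inv_zpow, inv_neg, inv_one]
  have key2 := H2.mul_left ((π:ℂ)/(2*z*Complex.sin ((π:ℂ)*z)))
  have hzC : (z:ℂ) ≠ 0 := Complex.ofReal_ne_zero.mpr (ne_of_gt hz)
  rw [← Complex.hasSum_ofReal]
  have hsinC' : Complex.sin ((z:ℂ)*π) ≠ 0 := by rwa [mul_comm]
  convert key2 using 1
  · rfl
  · funext n
    rw [hneg1]
    have hd := hz2 (n:ℤ)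
    push_cast at hd ⊢
    field_simp
    rw [zpow_natCast]
    ring
  · push_cast
    norm_num
    field_simp
    ring

lemma partial_fractions (a x : ℝ) (k : ℕ) (hk : 1 ≤ k) (hne : ∀ j < k, a + j - x ≠ 0) :
    (1:ℝ) / ∏ j ∈ Finset.range k, (a + j - x)
      = ∑ n ∈ Finset.range k,
          (-1:ℝ)^n * ((k-1).choose n) / (((k-1).factorial : ℝ) * (a + n - x)) := by
  induction k, hk using Nat.le_induction with
  | base =>
    simp [Finset.prod_range_one, Finset.sum_range_one]
  | succ k hk ih =>
    have hk' : ∀ j < k, a + j - x ≠ 0 := fun j hj => hne j (by omega)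
    have hkx : a + k - x ≠ 0 := hne k (by omega)
    have hfac : ((k.factorial : ℝ)) ≠ 0 := Nat.cast_ne_zero.mpr k.factorial_ne_zero
    have hfac' : (((k-1).factorial : ℝ)) ≠ 0 := Nat.cast_ne_zero.mpr (k-1).factorial_ne_zero
    rw [Finset.prod_range_succ, Nat.add_sub_cancel, ← one_div_mul_one_div, ih hk',
        Finset.sum_mul, Finset.sum_range_succ]
    have hterm : ∀ n ∈ Finset.range k,
        ((-1:ℝ)^n * ((k-1).choose n) / (((k-1).factorial : ℝ) * (a + n - x))) * (1/(a + k - x))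
          = (-1:ℝ)^n * (k.choose n) / ((k.factorial : ℝ) * (a + n - x))
            - (-1:ℝ)^n * (k.choose n) / ((k.factorial : ℝ) * (a + k - x)) := by
      intro n hn
      have hn' : n < k := Finset.mem_range.mp hn
      have h1 : a + n - x ≠ 0 := hk' n hn'
      have hcc : (((k-1).choose n : ℝ)) * k = (k.choose n : ℝ) * ((k:ℝ) - n) := by
        have h0 := Nat.choose_mul_succ_eq (k-1) n
        rw [Nat.sub_add_cancel hk] at h0
        have := congrArg (Nat.cast : ℕ → ℝ) h0
        push_cast [Nat.cast_sub hn'.le] at this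
        linarith [this]
      have hkf : (k.factorial : ℝ) = k * ((k-1).factorial : ℝ) := by
        rw [← Nat.mul_factorial_pred (by omega : k ≠ 0)]
        push_cast
        ring
      have hknr : ((k:ℝ) - n) ≠ 0 := by
        have : (n:ℝ) < k := by exact_mod_cast hn'
        linarith
      rw [div_sub_div _ _ (mul_ne_zero hfac h1) (mul_ne_zero hfac hkx)]
      rw [div_mul_div_comm, mul_one]
      rw [div_eq_div_iff (mul_ne_zero (mul_ne_zero hfac' h1) hkx)
          (mul_ne_zero (mul_ne_zero hfac h1) (mul_ne_zero hfac hkx))]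
      have expand : (-1:ℝ)^n * (k.choose n) * (a+k-x) - (-1:ℝ)^n * (k.choose n) * (a+n-x)
          = (-1:ℝ)^n * ((k.choose n) * ((k:ℝ) - n)) := by push_cast; ring
      rw [hkf]
      linear_combination ((-1:ℝ)^n * (k:ℝ) * (((k-1).factorial:ℝ))^2 * (a+n-x) * (a+k-x)) * hcc
    rw [Finset.sum_congr rfl hterm, Finset.sum_sub_distrib]
    have hsum0 : ∑ n ∈ Finset.range k, (-1:ℝ)^n * (k.choose n : ℝ) = -(-1:ℝ)^k := by
      have h0 := Int.alternating_sum_range_choose_of_ne (by omega : k ≠ 0)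
      have := congrArg (Int.cast : ℤ → ℝ) h0
      push_cast at this
      rw [Finset.sum_range_succ, Nat.choose_self] at this
      push_cast at this
      linarith [this]
    have hB : ∑ n ∈ Finset.range k, (-1:ℝ)^n * (k.choose n : ℝ) / ((k.factorial : ℝ) * (a + k - x))
        = -(-1:ℝ)^k / ((k.factorial : ℝ) * (a + k - x)) := by
      rw [← Finset.sum_div, hsum0]
    rw [hB, Nat.choose_self]
    push_cast
    ring

lemma gamma_prod (a : ℝ) (ha : 0 < a) (k : ℕ) :
    Real.Gamma (a + k) = Real.Gamma a * ∏ j ∈ Finset.range k, (a + j) := by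
  induction k with
  | zero => simp
  | succ k ih =>
    have h : a + ((k+1 : ℕ) : ℝ) = (a + k) + 1 := by push_cast; ring
    rw [h, Real.Gamma_add_one (by positivity), ih, Finset.prod_range_succ]
    ring

theorem gamma_ratio_series (a : ℝ) (ha : 1/2 < a) (k : ℕ) (hk : 1 ≤ k)
    (hne : ∀ n : ℕ, ∀ j < k, a + j - (n : ℝ) ^ 2 ≠ 0)
    (hirr : ∀ n < k, ¬∃ m : ℤ, Real.sqrt (a + n) = m) :
    ∑' n : ℕ, (-1 : ℝ) ^ n / ∏ j ∈ Finset.range k, (a + j - (n : ℝ) ^ 2)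
      = (1 / 2) * Real.Gamma a / Real.Gamma (a + k) +
        (Real.pi / (2 * ((k - 1).factorial : ℝ))) *
          ∑ n ∈ Finset.range k,
            (-1 : ℝ) ^ n * ((k - 1).choose n : ℝ) *
              (1 / Real.sin (Real.pi * Real.sqrt (a + n))) / Real.sqrt (a + n) := by
  have ha0 : 0 < a := by linarith
  have hpos : ∀ n : ℕ, (0:ℝ) < a + n := fun n => by positivity
  -- inner sums
  have hinner : ∀ n : ℕ, n < k → HasSum (fun m : ℕ => (-1:ℝ)^m / (a + n - (m:ℝ)^2))
      (1/(2*(a+n)) + π/(2*Real.sqrt (a+n)*Real.sin (π*Real.sqrt (a+n)))) := by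
    intro n hn
    have hs : Real.sqrt (a+n) ^ 2 = a + n := Real.sq_sqrt (hpos n).le
    have hzpos : 0 < Real.sqrt (a+n) := Real.sqrt_pos.mpr (hpos n)
    have hzi : ∀ m : ℤ, Real.sqrt (a+n) ≠ (m:ℝ) := by
      intro m hm
      exact hirr n hn ⟨m, hm⟩
    have := csc_hasSum (Real.sqrt (a+n)) hzpos hzi
    rw [hs] at this
    exact this
  have hc : ∀ n : ℕ, (-1:ℝ)^n * ((k-1).choose n : ℝ) / ((k-1).factorial : ℝ) = 
      (-1:ℝ)^n * ((k-1).choose n : ℝ) / ((k-1).factorial : ℝ) := fun n => rfl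
  -- rewrite each term of the tsum by partial fractions
  have step1 : ∑' m : ℕ, (-1 : ℝ) ^ m / ∏ j ∈ Finset.range k, (a + j - (m : ℝ) ^ 2)
      = ∑' m : ℕ, ∑ n ∈ Finset.range k,
          ((-1:ℝ)^n * ((k-1).choose n : ℝ) / ((k-1).factorial : ℝ)) * ((-1:ℝ)^m / (a + n - (m:ℝ)^2)) := by
    apply tsum_congr
    intro m
    rw [show (-1 : ℝ) ^ m / ∏ j ∈ Finset.range k, (a + j - (m : ℝ) ^ 2)
        = (-1:ℝ)^m * (1 / ∏ j ∈ Finset.range k, (a + j - (m : ℝ) ^ 2)) by ring]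
    rw [partial_fractions a ((m:ℝ)^2) k hk (hne m), Finset.mul_sum]
    apply Finset.sum_congr rfl
    intro n hn
    have hd := hne m n (Finset.mem_range.mp hn)
    have hfac : (((k-1).factorial : ℝ)) ≠ 0 := Nat.cast_ne_zero.mpr (k-1).factorial_ne_zero
    field_simp
  have hsumm : ∀ n ∈ Finset.range k, Summable (fun m : ℕ =>
      ((-1:ℝ)^n * ((k-1).choose n : ℝ) / ((k-1).factorial : ℝ)) * ((-1:ℝ)^m / (a + n - (m:ℝ)^2))) := by
    intro n hn
    exact ((hinner n (Finset.mem_range.mp hn)).summable).mul_left _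
  rw [step1, Summable.tsum_finsetSum hsumm]
  have step2 : ∀ n ∈ Finset.range k, ∑' m : ℕ,
      ((-1:ℝ)^n * ((k-1).choose n : ℝ) / ((k-1).factorial : ℝ)) * ((-1:ℝ)^m / (a + n - (m:ℝ)^2))
      = ((-1:ℝ)^n * ((k-1).choose n : ℝ) / ((k-1).factorial : ℝ)) *
          (1/(2*(a+n)) + π/(2*Real.sqrt (a+n)*Real.sin (π*Real.sqrt (a+n)))) := by
    intro n hn
    rw [tsum_mul_left, (hinner n (Finset.mem_range.mp hn)).tsum_eq]
  rw [Finset.sum_congr rfl step2]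
  have split : ∑ n ∈ Finset.range k, ((-1:ℝ)^n * ((k-1).choose n : ℝ) / ((k-1).factorial : ℝ)) *
          (1/(2*(a+n)) + π/(2*Real.sqrt (a+n)*Real.sin (π*Real.sqrt (a+n))))
      = (∑ n ∈ Finset.range k, ((-1:ℝ)^n * ((k-1).choose n : ℝ) / ((k-1).factorial : ℝ)) * (1/(2*(a+n))))
        + ∑ n ∈ Finset.range k, ((-1:ℝ)^n * ((k-1).choose n : ℝ) / ((k-1).factorial : ℝ)) *
            (π/(2*Real.sqrt (a+n)*Real.sin (π*Real.sqrt (a+n)))) := by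
    rw [← Finset.sum_add_distrib]
    apply Finset.sum_congr rfl
    intro n hn
    ring
  rw [split]
  congr 1
  · -- constant part equals (1/2) Γ a / Γ (a+k)
    have hpf := partial_fractions a 0 k hk (fun j hj => by have := hpos j; intro h; simp at h; linarith)
    have hprodpos : (0:ℝ) < ∏ j ∈ Finset.range k, (a + j) := 
      Finset.prod_pos (fun j _ => hpos j)
    have hgamma : Real.Gamma (a + k) = Real.Gamma a * ∏ j ∈ Finset.range k, (a + j) := 
      gamma_prod a ha0 k
    have hGa : Real.Gamma a ≠ 0 := (Real.Gamma_pos_of_pos ha0).ne'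
    rw [hgamma]
    rw [show (1/2) * Real.Gamma a / (Real.Gamma a * ∏ j ∈ Finset.range k, (a + j))
        = (1/2) * (1 / ∏ j ∈ Finset.range k, (a + j)) by
      field_simp]
    rw [show (1 : ℝ) / ∏ j ∈ Finset.range k, (a + j) 
        = 1 / ∏ j ∈ Finset.range k, (a + j - 0) by norm_num]
    rw [hpf, Finset.mul_sum]
    apply Finset.sum_congr rfl
    intro n hn
    rw [sub_zero]
    have hd : a + (n:ℝ) ≠ 0 := (hpos n).ne'
    have hfac : (((k-1).factorial : ℝ)) ≠ 0 := Nat.cast_ne_zero.mpr (k-1).factorial_ne_zero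
    field_simp
  · -- oscillatory part
    rw [Finset.mul_sum]
    apply Finset.sum_congr rfl
    intro n hn
    have hzpos : 0 < Real.sqrt (a+n) := Real.sqrt_pos.mpr (hpos n)
    have hsin : Real.sin (π*Real.sqrt (a+n)) ≠ 0 := by
      rw [Real.sin_ne_zero_iff]
      intro m hm
      apply hirr n (Finset.mem_range.mp hn)
      exact ⟨m, mul_right_cancel₀ Real.pi_ne_zero (by linarith [hm])⟩
    have hfac : (((k-1).factorial : ℝ)) ≠ 0 := Nat.cast_ne_zero.mpr (k-1).factorial_ne_zero
    field_simp
end
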